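/- arXiv:0906.5419 — 8 statements merged into one kernel-verified Lean document; each statement's English description precedes it below -/
import Mathlib

section
/- Let S be a convex subset of a real vector space V with Aff(S) = V, equipped with the weak topology generated by linear functionals bounded on S. If S is separated by effects (for distinct s,t ∈ S there is an affine functional e: S → [0,1] with e(s) ≠ e(t)), then V is a Hausdorff topological vector space. -/
lemma mem_vectorSpan_convex_rep {V : Type*} [AddCommGroup V] [Module ℝ V]
    {S : Set V} (hconv : Convex ℝ S) (hS : S.Nonempty) {v : V}
    (hv : v ∈ vectorSpan ℝ S) :
    ∃ c : ℝ, 0 ≤ c ∧ ∃ p ∈ S, ∃ q ∈ S, v = c • (p - q) := by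
  rw [vectorSpan_def] at hv
  induction hv using Submodule.span_induction with
  | mem x hx =>
      obtain ⟨p, hp, q, hq, rfl⟩ := hx
      exact ⟨1, zero_le_one, p, hp, q, hq, by simp [vsub_eq_sub]⟩
  | zero =>
      obtain ⟨p, hp⟩ := hS
      exact ⟨0, le_rfl, p, hp, p, hp, by simp⟩
  | add x y hx hy ihx ihy =>
      obtain ⟨c₁, hc₁, p₁, hp₁, q₁, hq₁, rfl⟩ := ihx
      obtain ⟨c₂, hc₂, p₂, hp₂, q₂, hq₂, rfl⟩ := ihy
      rcases eq_or_lt_of_le (add_nonneg hc₁ hc₂) with h0 | hpos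
      · have h1 : c₁ = 0 := by linarith
        have h2 : c₂ = 0 := by linarith
        obtain ⟨p, hp⟩ := hS
        exact ⟨0, le_rfl, p, hp, p, hp, by simp [h1, h2]⟩
      · set c := c₁ + c₂ with hc
        have hcne : c ≠ 0 := ne_of_gt hpos
        refine ⟨c, le_of_lt hpos,
          (c₁/c) • p₁ + (c₂/c) • p₂,
          hconv hp₁ hp₂ (div_nonneg hc₁ hpos.le) (div_nonneg hc₂ hpos.le)
            (by field_simp; exact hc.symm),
          (c₁/c) • q₁ + (c₂/c) • q₂,
          hconv hq₁ hq₂ (div_nonneg hc₁ hpos.le) (div_nonneg hc₂ hpos.le)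
            (by field_simp; exact hc.symm), ?_⟩
        have e1 : c * (c₁ / c) = c₁ := by field_simp
        have e2 : c * (c₂ / c) = c₂ := by field_simp
        match_scalars <;> field_simp <;> ring
  | smul r x hx ihx =>
      obtain ⟨c, hc, p, hp, q, hq, rfl⟩ := ihx
      rcases le_or_gt 0 r with hr | hr
      · exact ⟨r * c, mul_nonneg hr hc, p, hp, q, hq, by rw [smul_smul]⟩
      · refine ⟨-(r * c), by nlinarith, q, hq, p, hp, ?_⟩
        rw [smul_smul, neg_smul, ← smul_neg, neg_sub]

/-- Let `S` be a convex subset of a real vector space `V` with `Aff(S) = V`, equipped with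
the weak topology generated by linear functionals bounded on `S`. If `S` is separated by
effects (affine functionals into `[0,1]`), then `V` is a Hausdorff topological vector
space. -/
theorem hausdorff_of_separated {V : Type*} [AddCommGroup V] [Module ℝ V]
    (S : Set V) (hconv : Convex ℝ S) (hspan : affineSpan ℝ S = ⊤)
    (t : TopologicalSpace V)
    (ht : t = ⨅ f : {f : V →ₗ[ℝ] ℝ // Bornology.IsBounded (f.1 '' S)},
      TopologicalSpace.induced (f.1 : V → ℝ) inferInstance)
    (hsep : ∀ s ∈ S, ∀ u ∈ S, s ≠ u → ∃ e : V →ᵃ[ℝ] ℝ,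
      (∀ x ∈ S, e x ∈ Set.Icc (0 : ℝ) 1) ∧ e s ≠ e u) :
    @T2Space V t := by
  subst ht
  have hS : S.Nonempty := by
    by_contra h
    rw [Set.not_nonempty_iff_eq_empty] at h
    rw [h, AffineSubspace.span_empty] at hspan
    exact absurd hspan (AffineSubspace.bot_ne_top ℝ V V)
  letI tV : TopologicalSpace V := ⨅ g : {g : V →ₗ[ℝ] ℝ // Bornology.IsBounded (g.1 '' S)},
      TopologicalSpace.induced (g.1 : V → ℝ) inferInstance
  refine @T2Space.mk V tV ?_
  intro x y hxy
  -- x - y lies in vectorSpan ℝ S = ⊤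
  have hv : x - y ∈ vectorSpan ℝ S := by
    have : (affineSpan ℝ S).direction = ⊤ := by rw [hspan]; exact AffineSubspace.direction_top ℝ V V
    rw [direction_affineSpan] at this
    rw [this]; trivial
  obtain ⟨c, hc, p, hp, q, hq, hrep⟩ := mem_vectorSpan_convex_rep hconv hS hv
  have hcne : c ≠ 0 := by
    rintro rfl
    apply hxy
    have := hrep
    rw [zero_smul, sub_eq_zero] at this
    exact this
  have hpq : p ≠ q := by
    rintro rfl
    apply hxy
    rw [sub_self, smul_zero] at hrep
    exact sub_eq_zero.1 hrep
  obtain ⟨e, hbound, hne⟩ := hsep p hp q hq hpq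
  -- the linear part of e
  set f : V →ₗ[ℝ] ℝ := e.linear with hf
  have hdecomp : ∀ z : V, e z = f z + e 0 := by
    intro z
    have := AffineMap.decomp e
    have := congrFun this z
    simpa [hf] using this
  have hb : Bornology.IsBounded (f '' S) := by
    apply (Metric.isBounded_Icc (-(e 0)) (1 - e 0)).subset
    rintro _ ⟨z, hz, rfl⟩
    have hz' := hbound z hz
    have := hdecomp z
    constructor <;> [linarith [hz'.1]; linarith [hz'.2]]
  have hfxy : f x ≠ f y := by
    intro h
    apply hne
    have hfv : f (x - y) = 0 := by rw [map_sub, h, sub_self]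
    rw [hrep, map_smul, smul_eq_mul] at hfv
    have : f (p - q) = 0 := by
      rcases mul_eq_zero.1 hfv with h' | h'
      · exact absurd h' hcne
      · exact h'
    rw [map_sub, sub_eq_zero] at this
    rw [hdecomp p, hdecomp q, this]
  have hcont : @Continuous V ℝ tV _ (f : V → ℝ) :=
    continuous_iInf_dom (i := ⟨f, hb⟩) continuous_induced_dom
  exact separated_by_continuous hcont hfxy
end

section
/- Let S be a convex subset of a real topological vector space V with Aff(S) = V, where V carries the weak topology generated by linear functionals bounded on S. Then the subspace topology on S induced from V coincides with the weakest topology on S making every effect e: S → [0,1] (affine functional with values in [0,1]) continuous. -/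
/-- Let `S` be a convex subset of a real vector space `V` with `Aff(S) = V`, where `V`
carries the weak topology generated by linear functionals bounded on `S`. Then the
subspace topology on `S` coincides with the weakest topology on `S` making every effect
(affine functional with values in `[0,1]`) continuous. -/
theorem induced_topology_eq_effect_topology {V : Type*} [AddCommGroup V] [Module ℝ V]
    (S : Set V) (hconv : Convex ℝ S) (hspan : affineSpan ℝ S = ⊤)
    (t : TopologicalSpace V)
    (ht : t = ⨅ f : {f : V →ₗ[ℝ] ℝ // Bornology.IsBounded (f.1 '' S)},
      TopologicalSpace.induced (f.1 : V → ℝ) inferInstance) :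
    TopologicalSpace.induced ((↑) : S → V) t
      = ⨅ e : {e : V →ᵃ[ℝ] ℝ // ∀ x ∈ S, e x ∈ Set.Icc (0 : ℝ) 1},
          TopologicalSpace.induced (fun s : S => e.1 s) inferInstance := by
  subst ht
  rw [induced_iInf]
  simp only [induced_compose, Function.comp_def]
  refine le_antisymm (le_iInf fun e => ?_) (le_iInf fun f => ?_)
  · -- every effect is continuous for the linear-functional topology
    have key : ∀ x : V, e.1.linear x = e.1 x - e.1 0 := by
      intro x
      have h := e.1.map_vadd 0 x
      simp only [vadd_eq_add, add_zero] at h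
      linarith
    have hb : Bornology.IsBounded (e.1.linear '' S) := by
      apply (Metric.isBounded_Icc (0 - e.1 0) (1 - e.1 0)).subset
      rintro _ ⟨x, hx, rfl⟩
      have h := e.2 x hx
      rw [key x]
      exact ⟨by linarith [h.1], by linarith [h.2]⟩
    have heq : TopologicalSpace.induced (fun s : S => e.1 s) inferInstance
        = TopologicalSpace.induced (fun s : S => e.1.linear s) inferInstance := by
      have hfun : (fun s : S => e.1 s)
          = (Homeomorph.addRight (e.1 0)) ∘ (fun s : S => e.1.linear s) := by
        funext s
        simp [key s, sub_add_cancel]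
      rw [hfun, ← induced_compose, (Homeomorph.addRight (e.1 0)).induced_eq]
    rw [heq]
    exact iInf_le (fun g : {f : V →ₗ[ℝ] ℝ // Bornology.IsBounded (f.1 '' S)} =>
      TopologicalSpace.induced (fun s : S => g.1 s) inferInstance) ⟨e.1.linear, hb⟩
  · -- every bounded linear functional is continuous for the effect topology
    obtain ⟨C, hC⟩ := isBounded_iff_forall_norm_le.mp f.2
    set M : ℝ := max C 0 with hM
    have hM0 : 0 ≤ M := le_max_right _ _
    have hMa : ∀ x ∈ S, |f.1 x| ≤ M := by
      intro x hx
      exact le_trans (hC _ ⟨x, hx, rfl⟩) (le_max_left _ _)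
    have hd : (0:ℝ) < 2 * M + 2 := by linarith
    set eA : V →ᵃ[ℝ] ℝ :=
      (2 * M + 2)⁻¹ • (f.1.toAffineMap + AffineMap.const ℝ V M) with heA
    have heAx : ∀ x : V, eA x = (2 * M + 2)⁻¹ * (f.1 x + M) := by
      intro x
      simp only [heA, AffineMap.coe_smul, AffineMap.coe_add, Pi.smul_apply,
        Pi.add_apply, LinearMap.coe_toAffineMap, AffineMap.coe_const,
        Function.const_apply, smul_eq_mul, mul_add]
    have he : ∀ x ∈ S, eA x ∈ Set.Icc (0:ℝ) 1 := by
      intro x hx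
      have h := hMa x hx
      have h1 : -M ≤ f.1 x := (abs_le.mp h).1
      have h2 : f.1 x ≤ M := (abs_le.mp h).2
      rw [heAx x]
      constructor
      · exact mul_nonneg (by positivity) (by linarith)
      · rw [inv_mul_le_iff₀ hd]
        linarith
    have hfun : (fun s : S => f.1 s)
        = ((Homeomorph.mulLeft₀ (2 * M + 2) (ne_of_gt hd)).trans
            (Homeomorph.addRight (-M))) ∘ (fun s : S => eA s) := by
      funext s
      simp only [Function.comp_apply, Homeomorph.trans_apply,
        Homeomorph.coe_mulLeft₀, Homeomorph.coe_addRight, heAx]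
      field_simp
      ring
    rw [hfun, ← induced_compose,
      (((Homeomorph.mulLeft₀ (2 * M + 2) (ne_of_gt hd)).trans
          (Homeomorph.addRight (-M)))).induced_eq]
    exact iInf_le (fun g : {e : V →ᵃ[ℝ] ℝ // ∀ x ∈ S, e x ∈ Set.Icc (0:ℝ) 1} =>
      TopologicalSpace.induced (fun s : S => g.1 s) inferInstance) ⟨eA, he⟩
end

section
/- Let S be a convex, dense subset of a compact convex set S̃ in a locally convex Hausdorff TVS Ṽ, and let V be a dense subspace of Ṽ containing S whose induced topology makes every linear functional on V bounded on S continuous. Then every affine functional e: S → [0,1] has a unique continuous affine extension ẽ: S̃ → [0,1], and the map e ↦ ẽ is a bijection between effects on S and continuous affine functionals S̃ → [0,1]. -/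
/-- An affine functional on a convex subset `A` of a real vector space. -/
def IsAffineOn {E : Type*} [AddCommGroup E] [Module ℝ E] (A : Set E) (f : E → ℝ) : Prop :=
  ∀ x ∈ A, ∀ y ∈ A, ∀ l : ℝ, 0 ≤ l → l ≤ 1 →
    f (l • x + (1 - l) • y) = l * f x + (1 - l) * f y

/-- A virtual effect: a continuous affine functional on `A` with values in `[0,1]`. -/
def IsVirtualEffect {E : Type*} [AddCommGroup E] [Module ℝ E] [TopologicalSpace E]
    (A : Set E) (f : E → ℝ) : Prop :=
  ContinuousOn f A ∧ IsAffineOn A f ∧ ∀ x ∈ A, f x ∈ Set.Icc (0 : ℝ) 1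

section Aux

variable {X : Type*} [AddCommGroup X] [Module ℝ X]

/-- The cone of differences of points in `S`. -/
def coneD (S : Set X) : Set X :=
  {z | ∃ t : ℝ, 0 ≤ t ∧ ∃ p, p ∈ S ∧ ∃ q, q ∈ S ∧ z = t • (p - q)}

/-- Key well-definedness lemma. -/
theorem effect_key {S : Set X} (hS : Convex ℝ S) {e : X → ℝ} (he : IsAffineOn S e)
    {t s : ℝ} (ht : 0 ≤ t) (hs : 0 ≤ s) {p q u v : X}
    (hp : p ∈ S) (hq : q ∈ S) (hu : u ∈ S) (hv : v ∈ S)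
    (heq : t • (p - q) = s • (u - v)) :
    t * (e p - e q) = s * (e u - e v) := by
  rcases eq_or_lt_of_le (add_nonneg ht hs) with hc | hc
  · have ht0 : t = 0 := by linarith
    have hs0 : s = 0 := by linarith
    simp [ht0, hs0]
  · set c : ℝ := t + s with hcdef
    have hc0 : c ≠ 0 := ne_of_gt hc
    have h1 : t • p + s • v = s • u + t • q := by
      rw [smul_sub, smul_sub, sub_eq_sub_iff_add_eq_add] at heq
      linear_combination (norm := module) heq
    have h2 : (t / c) • p + (s / c) • v = (s / c) • u + (t / c) • q := by
      have h := congrArg (fun z => c⁻¹ • z) h1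
      simpa [smul_add, smul_smul, div_eq_inv_mul] using h
    have hl1 : (0 : ℝ) ≤ t / c := div_nonneg ht hc.le
    have hl2 : t / c ≤ 1 := by rw [div_le_one hc]; linarith
    have hm1 : (0 : ℝ) ≤ s / c := div_nonneg hs hc.le
    have hm2 : s / c ≤ 1 := by rw [div_le_one hc]; linarith
    have hrw1 : 1 - t / c = s / c := by field_simp; ring
    have hrw2 : 1 - s / c = t / c := by field_simp; ring
    have hA := he p hp v hv (t / c) hl1 hl2
    have hB := he u hu q hq (s / c) hm1 hm2
    rw [hrw1] at hA
    rw [hrw2] at hB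
    rw [h2] at hA
    have hkey : t / c * e p + s / c * e v = s / c * e u + t / c * e q := hA.symm.trans hB
    field_simp at hkey
    nlinarith [hkey]

theorem coneD_add {S : Set X} (hS : Convex ℝ S) {z w : X}
    (hz : z ∈ coneD S) (hw : w ∈ coneD S) : z + w ∈ coneD S := by
  obtain ⟨t, ht, p, hp, q, hq, rfl⟩ := hz
  obtain ⟨s, hs, u, hu, v, hv, rfl⟩ := hw
  rcases eq_or_lt_of_le (add_nonneg ht hs) with hc | hc
  · have ht0 : t = 0 := by linarith
    have hs0 : s = 0 := by linarith
    exact ⟨0, le_rfl, p, hp, p, hp, by simp [ht0, hs0]⟩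
  · set c : ℝ := t + s with hcdef
    have hc0 : c ≠ 0 := ne_of_gt hc
    have hab : t / c + s / c = 1 := by field_simp; exact hcdef.symm
    refine ⟨c, hc.le, (t / c) • p + (s / c) • u,
      hS hp hu (div_nonneg ht hc.le) (div_nonneg hs hc.le) hab,
      (t / c) • q + (s / c) • v,
      hS hq hv (div_nonneg ht hc.le) (div_nonneg hs hc.le) hab, ?_⟩
    match_scalars <;> (field_simp; try ring)

theorem coneD_smul {S : Set X} (r : ℝ) {z : X} (hz : z ∈ coneD S) :
    r • z ∈ coneD S := by
  obtain ⟨t, ht, p, hp, q, hq, rfl⟩ := hz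
  rcases le_or_gt 0 r with hr | hr
  · exact ⟨r * t, mul_nonneg hr ht, p, hp, q, hq, by rw [smul_smul]⟩
  · refine ⟨(-r) * t, mul_nonneg (by linarith) ht, q, hq, p, hp, ?_⟩
    match_scalars <;> ring

open Classical in
/-- The value of the induced linear functional on the cone. -/
noncomputable def coneVal (S : Set X) (e : X → ℝ) (z : X) : ℝ :=
  if h : z ∈ coneD S then
    h.choose * (e h.choose_spec.2.choose - e h.choose_spec.2.choose_spec.2.choose)
  else 0

theorem coneVal_eq {S : Set X} (hS : Convex ℝ S) {e : X → ℝ} (he : IsAffineOn S e)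
    {z : X} {t : ℝ} {p q : X} (ht : 0 ≤ t) (hp : p ∈ S) (hq : q ∈ S)
    (hzeq : z = t • (p - q)) : coneVal S e z = t * (e p - e q) := by
  have hz : z ∈ coneD S := ⟨t, ht, p, hp, q, hq, hzeq⟩
  classical
  rw [coneVal, dif_pos hz]
  have h1 := hz.choose_spec.1
  have h2 := hz.choose_spec.2.choose_spec.1
  have h3 := hz.choose_spec.2.choose_spec.2.choose_spec.1
  have h4 := hz.choose_spec.2.choose_spec.2.choose_spec.2
  exact effect_key hS he h1 ht h2 h3 hp hq (h4.symm.trans hzeq)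

theorem coneVal_add {S : Set X} (hS : Convex ℝ S) {e : X → ℝ} (he : IsAffineOn S e)
    {z w : X} (hz : z ∈ coneD S) (hw : w ∈ coneD S) :
    coneVal S e (z + w) = coneVal S e z + coneVal S e w := by
  obtain ⟨t, ht, p, hp, q, hq, rfl⟩ := hz
  obtain ⟨s, hs, u, hu, v, hv, rfl⟩ := hw
  rw [coneVal_eq hS he ht hp hq rfl, coneVal_eq hS he hs hu hv rfl]
  rcases eq_or_lt_of_le (add_nonneg ht hs) with hc | hc
  · have ht0 : t = 0 := by linarith
    have hs0 : s = 0 := by linarith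
    rw [coneVal_eq hS he le_rfl hp hp (by simp [ht0, hs0])]
    simp [ht0, hs0]
  · set c : ℝ := t + s with hcdef
    have hc0 : c ≠ 0 := ne_of_gt hc
    have hab : t / c + s / c = 1 := by field_simp; exact hcdef.symm
    have hta : (0 : ℝ) ≤ t / c := div_nonneg ht hc.le
    have hsa : (0 : ℝ) ≤ s / c := div_nonneg hs hc.le
    have htb : t / c ≤ 1 := by rw [div_le_one hc]; linarith
    have hsb : s / c ≤ 1 := by rw [div_le_one hc]; linarith
    have hp' : (t / c) • p + (s / c) • u ∈ S := hS hp hu hta hsa hab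
    have hq' : (t / c) • q + (s / c) • v ∈ S := hS hq hv hta hsa hab
    have hrep : t • (p - q) + s • (u - v)
        = c • (((t / c) • p + (s / c) • u) - ((t / c) • q + (s / c) • v)) := by
      match_scalars <;> (field_simp; try ring)
    rw [coneVal_eq hS he hc.le hp' hq' hrep]
    have hrw1 : (1 : ℝ) - t / c = s / c := by field_simp; ring
    have heA := he p hp u hu (t / c) hta htb
    have heB := he q hq v hv (t / c) hta htb
    rw [hrw1] at heA heB
    rw [heA, heB]
    field_simp
    ring

theorem coneVal_smul {S : Set X} (hS : Convex ℝ S) {e : X → ℝ} (he : IsAffineOn S e)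
    (r : ℝ) {z : X} (hz : z ∈ coneD S) :
    coneVal S e (r • z) = r * coneVal S e z := by
  obtain ⟨t, ht, p, hp, q, hq, rfl⟩ := hz
  rw [coneVal_eq hS he ht hp hq rfl]
  rcases le_or_gt 0 r with hr | hr
  · rw [coneVal_eq hS he (mul_nonneg hr ht) hp hq (by rw [smul_smul])]
    ring
  · have : r • t • (p - q) = ((-r) * t) • (q - p) := by match_scalars <;> ring
    rw [coneVal_eq hS he (mul_nonneg (by linarith) ht) hq hp this]
    ring

end Aux

/-- Every effect on `S` has a unique continuous affine extension to `S̃ = cl(S)` with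
values in `[0,1]`, and `e ↦ ẽ` is a bijection between effects on `S` and virtual effects
on `S̃`.  Here `X` plays the role of the virtual underlying space `Ṽ` (a locally convex
Hausdorff TVS), and `V` the real underlying space, a dense subspace containing `S` whose
induced topology makes every linear functional bounded on `S` continuous. -/
theorem effect_extension_bijection {X : Type*} [AddCommGroup X] [Module ℝ X]
    [TopologicalSpace X] [IsTopologicalAddGroup X] [ContinuousSMul ℝ X]
    [LocallyConvexSpace ℝ X] [T2Space X]
    (S Stilde : Set X) (hS : Convex ℝ S) (hSt : Convex ℝ Stilde)
    (hcomp : IsCompact Stilde) (hcl : closure S = Stilde)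
    (V : Submodule ℝ X) (hSV : S ⊆ (V : Set X)) (hVdense : Dense (V : Set X))
    (hVcont : ∀ f : V →ₗ[ℝ] ℝ,
      Bornology.IsBounded (f '' (((↑) : V → X) ⁻¹' S)) → Continuous f) :
    (∀ e : X → ℝ, IsAffineOn S e → (∀ x ∈ S, e x ∈ Set.Icc (0 : ℝ) 1) →
      ∃ g : X → ℝ, IsVirtualEffect Stilde g ∧ Set.EqOn e g S ∧
        ∀ g' : X → ℝ, IsVirtualEffect Stilde g' → Set.EqOn e g' S →
          Set.EqOn g g' Stilde) ∧
    (∀ g : X → ℝ, IsVirtualEffect Stilde g →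
      IsAffineOn S g ∧ ∀ x ∈ S, g x ∈ Set.Icc (0 : ℝ) 1) := by
  subst hcl
  constructor
  · intro e he hee
    rcases S.eq_empty_or_nonempty with rfl | ⟨x₀, hx₀⟩
    · rw [closure_empty]
      refine ⟨fun _ => 0, ⟨continuousOn_empty _, ?_, ?_⟩, ?_, ?_⟩ <;>
        simp [IsAffineOn, Set.EqOn]
    -- nonempty case
    · -- the submodule spanned by differences, inside V
      set W : Submodule ℝ X :=
        { carrier := coneD S
          add_mem' := fun hz hw => coneD_add hS hz hw
          zero_mem' := ⟨0, le_rfl, x₀, hx₀, x₀, hx₀, by simp⟩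
          smul_mem' := fun r _ hz => coneD_smul r hz } with hW
      set Wv : Submodule ℝ V := W.comap V.subtype with hWv
      have hmemWv : ∀ z : Wv, (z : X) ∈ coneD S := fun z => z.2
      -- the linear functional on Wv
      set f₀ : Wv →ₗ[ℝ] ℝ :=
        { toFun := fun z => coneVal S e (z : X)
          map_add' := fun z w => coneVal_add hS he z.2 w.2
          map_smul' := fun r z => coneVal_smul hS he r z.2 } with hf₀
      obtain ⟨f, hf⟩ := LinearMap.exists_extend f₀
      have hfWv : ∀ z : Wv, f (z : V) = coneVal S e ((z : V) : X) := by
        intro z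
        have := congrFun (congrArg (fun (g : Wv →ₗ[ℝ] ℝ) => (g : Wv → ℝ)) hf) z
        simp at this; exact this
      set x₀v : V := ⟨x₀, hSV hx₀⟩ with hx₀v
      -- the value of f on points of S
      have hfS : ∀ (y : V), (y : X) ∈ S → f y = e y - e x₀ + f x₀v := by
        intro y hy
        have hmem : ((y - x₀v : V) : X) ∈ W := by
          show ((y : X) - x₀) ∈ coneD S
          exact ⟨1, zero_le_one, y, hy, x₀, hx₀, by simp⟩
        have h1 : f (y - x₀v) = coneVal S e ((y : X) - x₀) := hfWv ⟨y - x₀v, hmem⟩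
        have h2 : coneVal S e ((y : X) - x₀) = e y - e x₀ := by
          rw [coneVal_eq hS he zero_le_one hy hx₀ (by simp)]; ring
        have h3 : f (y - x₀v) = f y - f x₀v := by rw [map_sub]
        rw [h2] at h1
        linarith [h1, h3.symm.trans h1]
      -- f is bounded on S, hence continuous
      have hb : Bornology.IsBounded (f '' (((↑) : V → X) ⁻¹' S)) := by
        rw [isBounded_iff_forall_norm_le]
        refine ⟨1 + |f x₀v|, ?_⟩
        rintro _ ⟨y, hy, rfl⟩
        rw [Real.norm_eq_abs, hfS y hy]
        have h1 := hee _ hy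
        have h2 := hee _ hx₀
        rw [Set.mem_Icc] at h1 h2
        rw [abs_le]
        constructor
        · nlinarith [neg_abs_le (f x₀v)]
        · nlinarith [le_abs_self (f x₀v)]
      have hfc : Continuous f := hVcont f hb
      -- set up the uniform structure and extend
      letI : UniformSpace X := IsTopologicalAddGroup.rightUniformSpace X
      haveI : IsUniformAddGroup X := isUniformAddGroup_of_addCommGroup
      haveI : IsUniformAddGroup V := V.toAddSubgroup.isUniformAddGroup
      have hUCf : UniformContinuous f :=
        uniformContinuous_of_continuousAt_zero f hfc.continuousAt
      set h : V → ℝ := fun v => f v + (e x₀ - f x₀v) with hh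
      have hUC : UniformContinuous h := hUCf.add uniformContinuous_const
      have ue : IsUniformInducing ((↑) : V → X) :=
        isUniformEmbedding_subtype_val.isUniformInducing
      have dr : DenseRange ((↑) : V → X) := by
        rw [DenseRange, Subtype.range_coe_subtype]
        exact hVdense
      set g : X → ℝ := (ue.isDenseInducing dr).extend h with hg
      have hgc : Continuous g :=
        (uniformContinuous_uniformly_extend ue dr hUC).continuous
      have hgV : ∀ v : V, g v = h v := fun v => uniformly_extend_of_ind ue dr hUC v
      have hgS : ∀ x ∈ S, g x = e x := by
        intro x hx
        have := hgV ⟨x, hSV hx⟩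
        rw [this, hh]
        simp only
        rw [hfS ⟨x, hSV hx⟩ hx]
        ring
      have hSsub : S ⊆ closure S := subset_closure
      -- g is affine on closure S
      have hgaff : IsAffineOn (closure S) g := by
        intro x hx y hy l h0 h1
        have hcont1 : Continuous fun p : X × X =>
            g (l • p.1 + (1 - l) • p.2) - (l * g p.1 + (1 - l) * g p.2) := by
          fun_prop
        have hzero : ∀ p ∈ S ×ˢ S,
            g (l • p.1 + (1 - l) • p.2) - (l * g p.1 + (1 - l) * g p.2) = (0 : ℝ) := by
          rintro ⟨a, b⟩ ⟨ha, hb⟩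
          have hmem : l • a + (1 - l) • b ∈ S := hS ha hb h0 (by linarith) (by ring)
          rw [hgS _ hmem, hgS _ ha, hgS _ hb, he a ha b hb l h0 h1]
          ring
        have hxy : (x, y) ∈ closure (S ×ˢ S) := by
          rw [closure_prod_eq]
          exact ⟨hx, hy⟩
        have hmt : Set.MapsTo (fun p : X × X =>
            g (l • p.1 + (1 - l) • p.2) - (l * g p.1 + (1 - l) * g p.2)) (S ×ˢ S)
            ({0} : Set ℝ) := fun p hp => hzero p hp
        have := map_mem_closure hcont1 hxy hmt
        rw [closure_singleton] at this
        have h0' : g (l • x + (1 - l) • y) - (l * g x + (1 - l) * g y) = 0 := this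
        linarith
      -- values in [0,1] on closure S
      have hgIcc : ∀ x ∈ closure S, g x ∈ Set.Icc (0 : ℝ) 1 := by
        intro x hx
        have hmt : Set.MapsTo g S (Set.Icc (0 : ℝ) 1) := by
          intro y hy
          rw [hgS y hy]
          exact hee y hy
        have := map_mem_closure hgc hx hmt
        rwa [isClosed_Icc.closure_eq] at this
      refine ⟨g, ⟨hgc.continuousOn, hgaff, hgIcc⟩, fun x hx => (hgS x hx).symm, ?_⟩
      -- uniqueness
      intro g' hg' heg' x hx
      have hnb : Filter.NeBot (nhdsWithin x S) := mem_closure_iff_nhdsWithin_neBot.1 hx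
      have t2 : Filter.Tendsto g (nhdsWithin x S) (nhds (g x)) :=
        (hgc.continuousAt.continuousWithinAt)
      have t1 : Filter.Tendsto g' (nhdsWithin x S) (nhds (g' x)) :=
        (hg'.1 x hx).mono hSsub
      have t1' : Filter.Tendsto g (nhdsWithin x S) (nhds (g' x)) := by
        refine t1.congr' ?_
        filter_upwards [self_mem_nhdsWithin] with y hy
        rw [← heg' hy, hgS y hy]
      exact tendsto_nhds_unique t2 t1'
  · intro g hg
    refine ⟨fun x hx y hy l h0 h1 =>
      hg.2.1 x (subset_closure hx) y (subset_closure hy) l h0 h1,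
      fun x hx => hg.2.2 x (subset_closure hx)⟩
end

section
/- Suppose there exist p ≥ max_i p_i, states t_1,...,t_N ∈ S̃, and s ∈ S̃ such that (p_i/p) s_i + (1 − p_i/p) t_i = s for every i (a weak Helstrom family with Helstrom ratio p). Then the optimal success probability P_succ for discriminating s_1,...,s_N with priors p_1,...,p_N satisfies P_succ ≤ p. -/
/-- An `N`-valued observable on `A`: a tuple of effects summing to `1` on `A`. -/
def IsObservableOn {E : Type*} [AddCommGroup E] [Module ℝ E] (A : Set E) {N : ℕ}
    (e : Fin N → E → ℝ) : Prop :=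
  (∀ i, IsAffineOn A (e i) ∧ ∀ x ∈ A, e i x ∈ Set.Icc (0 : ℝ) 1) ∧
    ∀ x ∈ A, (∑ i, e i x) = 1

section Comb
variable {X : Type*} [AddCommGroup X] [Module ℝ X]

lemma affine_comb {S : Set X} (hS : Convex ℝ S) {e : X → ℝ} (he : IsAffineOn S e)
    {ι : Type*} (A : Finset ι) :
    ∀ (w : ι → ℝ) (z : ι → X), (∀ i ∈ A, 0 ≤ w i) → (∑ i ∈ A, w i) = 1 →
      (∀ i ∈ A, z i ∈ S) → e (∑ i ∈ A, w i • z i) = ∑ i ∈ A, w i * e (z i) := by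
  classical
  induction A using Finset.induction_on with
  | empty => intro w z _ h1 _; simp at h1
  | insert a A ha ih =>
    intro w z hw h1 hz
    rw [Finset.sum_insert ha] at h1 ⊢
    rw [Finset.sum_insert ha]
    set W := ∑ i ∈ A, w i with hW
    have hW0 : 0 ≤ W := Finset.sum_nonneg fun i hi => hw i (Finset.mem_insert_of_mem hi)
    rcases eq_or_lt_of_le hW0 with hWz | hWpos
    · -- W = 0, so all weights in A vanish and w a = 1
      have hall : ∀ i ∈ A, w i = 0 := by
        intro i hi
        have := (Finset.sum_eq_zero_iff_of_nonneg
          (fun j hj => hw j (Finset.mem_insert_of_mem hj))).1 hWz.symm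
        exact this i hi
      have hwa : w a = 1 := by rw [← h1, ← hWz]; ring
      have hz0 : (∑ i ∈ A, w i • z i) = 0 := by
        apply Finset.sum_eq_zero; intro i hi; rw [hall i hi, zero_smul]
      have he0 : (∑ i ∈ A, w i * e (z i)) = 0 := by
        apply Finset.sum_eq_zero; intro i hi; rw [hall i hi, zero_mul]
      rw [hz0, he0, hwa, add_zero, add_zero, one_smul, one_mul]
    · -- W > 0
      have hWne : W ≠ 0 := ne_of_gt hWpos
      set y := ∑ i ∈ A, (w i / W) • z i with hy
      have hsum1 : (∑ i ∈ A, w i / W) = 1 := by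
        rw [← Finset.sum_div, ← hW, div_self hWne]
      have hymem : y ∈ S := hS.sum_mem
        (fun i hi => div_nonneg (hw i (Finset.mem_insert_of_mem hi)) hW0) hsum1
        (fun i hi => hz i (Finset.mem_insert_of_mem hi))
      have hey : e y = ∑ i ∈ A, (w i / W) * e (z i) :=
        ih (fun i => w i / W) z
          (fun i hi => div_nonneg (hw i (Finset.mem_insert_of_mem hi)) hW0)
          hsum1 (fun i hi => hz i (Finset.mem_insert_of_mem hi))
      have hWsm : (∑ i ∈ A, w i • z i) = W • y := by
        rw [hy, Finset.smul_sum]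
        apply Finset.sum_congr rfl
        intro i hi
        rw [smul_smul, mul_div_cancel₀ _ hWne]
      have hwa1 : W = 1 - w a := by linarith
      have hwa0 : 0 ≤ w a := hw a (Finset.mem_insert_self a A)
      have hwale : w a ≤ 1 := by linarith
      rw [hWsm, hwa1]
      rw [he (z a) (hz a (Finset.mem_insert_self a A)) y hymem (w a) hwa0 hwale, hey]
      rw [Finset.mul_sum, ← hwa1]
      congr 1
      apply Finset.sum_congr rfl
      intro i hi
      rw [← mul_assoc, mul_div_cancel₀ _ hWne]
end Comb

section LinExt
variable {X : Type*} [AddCommGroup X] [Module ℝ X]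

lemma key_kernel {S : Set X} (hS : Convex ℝ S) {e : X → ℝ} (he : IsAffineOn S e)
    {x₀ : X} (hx₀ : x₀ ∈ S) (l : S →₀ ℝ)
    (hTl : Finsupp.linearCombination ℝ (fun x : S => (x : X) - x₀) l = 0) :
    Finsupp.linearCombination ℝ (fun x : S => e x - e x₀) l = 0 := by
  classical
  rw [Finsupp.linearCombination_apply, Finsupp.sum] at hTl ⊢
  set A := l.support with hA
  set Ap := A.filter (fun x => 0 < l x) with hAp
  set An := A \ Ap with hAn
  have hAsplit : Ap ∪ An = A := Finset.union_sdiff_of_subset (Finset.filter_subset _ _)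
  have hdisj : Disjoint Ap An := Finset.disjoint_sdiff
  have hpos : ∀ x ∈ Ap, 0 < l x := fun x hx => (Finset.mem_filter.1 hx).2
  have hneg : ∀ x ∈ An, l x < 0 := by
    intro x hx
    rw [hAn, Finset.mem_sdiff] at hx
    obtain ⟨hxA, hxnAp⟩ := hx
    have hne : l x ≠ 0 := Finsupp.mem_support_iff.1 hxA
    rcases lt_or_gt_of_ne hne with h | h
    · exact h
    · exact absurd (Finset.mem_filter.2 ⟨hxA, h⟩) hxnAp
  set a := ∑ x ∈ Ap, l x with ha
  set b := ∑ x ∈ An, (-(l x)) with hb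
  have ha0 : 0 ≤ a := Finset.sum_nonneg fun x hx => (hpos x hx).le
  have hb0 : 0 ≤ b := Finset.sum_nonneg fun x hx => (neg_nonneg.2 (hneg x hx).le)
  have hsplitR : ∀ f : S → ℝ, (∑ x ∈ A, f x) = (∑ x ∈ Ap, f x) + (∑ x ∈ An, f x) := by
    intro f; rw [← hAsplit, Finset.sum_union hdisj]
  have hsplitX : ∀ f : S → X, (∑ x ∈ A, f x) = (∑ x ∈ Ap, f x) + (∑ x ∈ An, f x) := by
    intro f; rw [← hAsplit, Finset.sum_union hdisj]
  have hsw : (∑ x ∈ A, l x) = a - b := by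
    rw [hsplitR (fun x => l x)]
    have : (∑ x ∈ An, l x) = -b := by rw [hb, ← Finset.sum_neg_distrib]; simp
    rw [this, ha]; ring
  rcases eq_or_lt_of_le (by positivity : (0:ℝ) ≤ a + b) with hM0 | hMpos
  · have haz : a = 0 := by linarith
    have hbz : b = 0 := by linarith
    have hApe : Ap = ∅ := by
      by_contra h
      obtain ⟨x, hx⟩ := Finset.nonempty_of_ne_empty h
      have : 0 < a := Finset.sum_pos' (fun y hy => (hpos y hy).le) ⟨x, hx, hpos x hx⟩
      linarith
    have hAne : An = ∅ := by
      by_contra h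
      obtain ⟨x, hx⟩ := Finset.nonempty_of_ne_empty h
      have : 0 < b := Finset.sum_pos' (fun y hy => (neg_nonneg.2 (hneg y hy).le))
        ⟨x, hx, neg_pos.2 (hneg x hx)⟩
      linarith
    have hAe : A = ∅ := by rw [← hAsplit, hApe, hAne]; simp
    rw [hAe]; simp
  · set M := a + b with hM
    have hMne : M ≠ 0 := ne_of_gt hMpos
    -- vector identity
    have h2 : (∑ x ∈ A, l x • (x : X)) = (∑ x ∈ A, l x) • x₀ := by
      rw [← sub_eq_zero, Finset.sum_smul, ← Finset.sum_sub_distrib]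
      simp only [← smul_sub]
      exact hTl
    have h4 : (∑ x ∈ An, l x • (x : X)) = -∑ x ∈ An, (-(l x)) • (x : X) := by simp
    rw [hsplitX (fun x => l x • (x:X)), hsw, h4, sub_smul] at h2
    have hvec : (∑ x ∈ Ap, l x • (x : X)) + b • x₀ =
        (∑ x ∈ An, (-(l x)) • (x : X)) + a • x₀ := by
      linear_combination (norm := module) h2
    -- normalized combinations
    have hscaleP : (∑ x ∈ Ap, (l x / M) • (x : X)) + (b / M) • x₀
        = (M⁻¹) • ((∑ x ∈ Ap, l x • (x : X)) + b • x₀) := by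
      rw [smul_add, Finset.smul_sum]
      congr 1
      · exact Finset.sum_congr rfl fun x _ => by rw [smul_smul, inv_mul_eq_div]
      · rw [smul_smul, inv_mul_eq_div]
    have hscaleN : (∑ x ∈ An, ((-(l x)) / M) • (x : X)) + (a / M) • x₀
        = (M⁻¹) • ((∑ x ∈ An, (-(l x)) • (x : X)) + a • x₀) := by
      rw [smul_add, Finset.smul_sum]
      congr 1
      · exact Finset.sum_congr rfl fun x _ => by rw [smul_smul, inv_mul_eq_div]
      · rw [smul_smul, inv_mul_eq_div]
    have huv : (∑ x ∈ Ap, (l x / M) • (x : X)) + (b / M) • x₀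
        = (∑ x ∈ An, ((-(l x)) / M) • (x : X)) + (a / M) • x₀ := by
      rw [hscaleP, hscaleN, hvec]
    -- apply the affine combination lemma on both sides, via a Sum index type
    have main : ∀ (B : Finset S) (c : S → ℝ) (tot : ℝ), (∀ x ∈ B, 0 ≤ c x) → 0 ≤ tot →
        (∑ x ∈ B, c x) + tot = 1 →
        e ((∑ x ∈ B, c x • (x : X)) + tot • x₀) = (∑ x ∈ B, c x * e x) + tot * e x₀ := by
      intro B c tot hc htot hsum
      set B' : Finset (S ⊕ Unit) := B.image Sum.inl ∪ {Sum.inr ()} with hB'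
      set w : S ⊕ Unit → ℝ := Sum.elim c (fun _ => tot) with hw
      set Z : S ⊕ Unit → X := Sum.elim (fun x => (x : X)) (fun _ => x₀) with hZ
      have hdisj' : Disjoint (B.image Sum.inl) ({Sum.inr ()} : Finset (S ⊕ Unit)) := by
        simp
      have hsum_split : ∀ g : S ⊕ Unit → ℝ,
          (∑ i ∈ B', g i) = (∑ x ∈ B, g (Sum.inl x)) + g (Sum.inr ()) := by
        intro g
        rw [hB', Finset.sum_union hdisj', Finset.sum_image (fun x _ y _ h => Sum.inl_injective h)]
        simp
      have hsum_splitX : ∀ g : S ⊕ Unit → X,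
          (∑ i ∈ B', g i) = (∑ x ∈ B, g (Sum.inl x)) + g (Sum.inr ()) := by
        intro g
        rw [hB', Finset.sum_union hdisj', Finset.sum_image (fun x _ y _ h => Sum.inl_injective h)]
        simp
      have h1 : (∑ i ∈ B', w i • Z i) = (∑ x ∈ B, c x • (x : X)) + tot • x₀ := by
        rw [hsum_splitX]; rfl
      have h2' : (∑ i ∈ B', w i * e (Z i)) = (∑ x ∈ B, c x * e x) + tot * e x₀ := by
        rw [hsum_split]; rfl
      rw [← h1, ← h2']
      apply affine_comb hS he B' w Z
      · rintro (x | u) hi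
        · exact hc x (by
            have := Finset.mem_union.1 hi
            rcases this with h | h
            · obtain ⟨y, hy, hyy⟩ := Finset.mem_image.1 h
              cases Sum.inl_injective hyy; exact hy
            · simp at h)
        · exact htot
      · rw [hsum_split]; exact hsum
      · rintro (x | u) _
        · exact x.2
        · exact hx₀
    have hcp : ∀ x ∈ Ap, 0 ≤ l x / M := fun x hx => div_nonneg (hpos x hx).le hMpos.le
    have hcn : ∀ x ∈ An, 0 ≤ (-(l x)) / M :=
      fun x hx => div_nonneg (neg_nonneg.2 (hneg x hx).le) hMpos.le
    have hsump : (∑ x ∈ Ap, l x / M) + b / M = 1 := by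
      rw [← Finset.sum_div, ← ha, ← add_div, ← hM, div_self hMne]
    have hsumn : (∑ x ∈ An, (-(l x)) / M) + a / M = 1 := by
      rw [← Finset.sum_div, ← hb, ← add_div]
      rw [show b + a = M by rw [hM]; ring, div_self hMne]
    have hEp := main Ap (fun x => l x / M) (b / M) hcp (div_nonneg hb0 hMpos.le) hsump
    have hEn := main An (fun x => (-(l x)) / M) (a / M) hcn (div_nonneg ha0 hMpos.le) hsumn
    rw [huv, hEn] at hEp
    -- clear denominators
    have hsp : (∑ x ∈ Ap, (l x / M) * e x) = (∑ x ∈ Ap, l x * e x) / M := by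
      rw [Finset.sum_div]; exact Finset.sum_congr rfl fun x _ => by ring
    have hsn : (∑ x ∈ An, ((-(l x)) / M) * e x) = (-(∑ x ∈ An, l x * e x)) / M := by
      rw [show (-∑ x ∈ An, l x * e ↑x) = ∑ x ∈ An, -(l x * e ↑x) by
        rw [← Finset.sum_neg_distrib], Finset.sum_div]
      exact Finset.sum_congr rfl fun x _ => by ring
    rw [hsp, hsn] at hEp
    have hEp2 : (∑ x ∈ Ap, l x * e x) + b * e x₀
        = -(∑ x ∈ An, l x * e x) + a * e x₀ := by
      have key2 : ∀ u v : ℝ, u / M = v / M → u = v := fun u v h => (div_left_inj' hMne).1 h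
      apply key2
      linear_combination -hEp
    have hgoal : (∑ x ∈ A, l x • (e x - e x₀))
        = (∑ x ∈ Ap, l x * e x) + (∑ x ∈ An, l x * e x) - (a - b) * e x₀ := by
      have : ∀ x : S, l x • (e x - e x₀) = l x * e x - l x * e x₀ := by
        intro x; rw [smul_eq_mul]; ring
      rw [Finset.sum_congr rfl fun x _ => this x, Finset.sum_sub_distrib,
        hsplitR (fun x => l x * e x), ← Finset.sum_mul, hsw]
    rw [hgoal]
    linarith
end LinExt

section LinExt2
variable {X : Type*} [AddCommGroup X] [Module ℝ X]

set_option synthInstance.maxHeartbeats 1000000 in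
lemma exists_linear_of_affine {S : Set X} (hS : Convex ℝ S) {e : X → ℝ} (he : IsAffineOn S e)
    {x₀ : X} (hx₀ : x₀ ∈ S) :
    ∃ g : X →ₗ[ℝ] ℝ, ∀ x ∈ S, g x - g x₀ = e x - e x₀ := by
  classical
  set T : (S →₀ ℝ) →ₗ[ℝ] X := Finsupp.linearCombination ℝ (fun x : S => (x : X) - x₀) with hT
  set L : (S →₀ ℝ) →ₗ[ℝ] ℝ := Finsupp.linearCombination ℝ (fun x : S => e x - e x₀) with hL
  have key : ∀ l, T l = 0 → L l = 0 := fun l hl => key_kernel hS he hx₀ l hl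
  obtain ⟨σ, hσ⟩ := T.rangeRestrict.exists_rightInverse_of_surjective T.range_rangeRestrict
  obtain ⟨Q, hQ⟩ := Submodule.exists_isCompl (LinearMap.range T)
  set g : X →ₗ[ℝ] ℝ := LinearMap.ofIsCompl hQ (L.comp σ) 0 with hg
  refine ⟨g, ?_⟩
  have hgW : ∀ u : LinearMap.range T, g u = L (σ u) := by
    intro u
    rw [hg, LinearMap.ofIsCompl_left_apply]
    rfl
  have hTσ : ∀ u : LinearMap.range T, T (σ u) = (u : X) := by
    intro u
    have := congrArg (fun m => m u) hσ
    simp only [LinearMap.comp_apply, LinearMap.id_apply] at this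
    calc T (σ u) = (T.rangeRestrict (σ u) : X) := rfl
      _ = (u : X) := by rw [this]
  intro x hx
  have hmem : x - x₀ ∈ LinearMap.range T :=
    ⟨Finsupp.single ⟨x, hx⟩ 1, by rw [hT, Finsupp.linearCombination_single, one_smul]⟩
  set u : LinearMap.range T := ⟨x - x₀, hmem⟩ with hu
  have h1 : g (x - x₀) = L (σ u) := hgW u
  have hTs : T (Finsupp.single ⟨x, hx⟩ 1) = x - x₀ := by
    rw [hT, Finsupp.linearCombination_single, one_smul]
  have hLs : L (Finsupp.single ⟨x, hx⟩ 1) = e x - e x₀ := by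
    rw [hL, Finsupp.linearCombination_single, smul_eq_mul, one_mul]
  have h2 : T (σ u - Finsupp.single ⟨x, hx⟩ 1) = 0 := by
    rw [map_sub, hTσ u, hTs]
    simp [hu]
  have h3 : L (σ u) = L (Finsupp.single ⟨x, hx⟩ 1) := by
    have := key _ h2
    rw [map_sub] at this
    linarith
  rw [map_sub] at h1
  rw [h3, hLs] at h1
  linarith
end LinExt2

section TopExt
variable {X : Type*} [AddCommGroup X] [Module ℝ X] [TopologicalSpace X]
  [IsTopologicalAddGroup X] [ContinuousSMul ℝ X]

set_option maxHeartbeats 2000000 in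
set_option synthInstance.maxHeartbeats 1000000 in
lemma exists_cont_affine_ext (S : Set X) (hS : Convex ℝ S)
    (V : Submodule ℝ X) (hSV : S ⊆ (V : Set X)) (hVdense : Dense (V : Set X))
    (hVcont : ∀ f : V →ₗ[ℝ] ℝ,
      Bornology.IsBounded (f '' (((↑) : V → X) ⁻¹' S)) → Continuous f)
    {e : X → ℝ} (he : IsAffineOn S e) (hbd : ∀ x ∈ S, e x ∈ Set.Icc (0:ℝ) 1)
    {x₀ : X} (hx₀ : x₀ ∈ S) :
    ∃ E : X → ℝ, Continuous E ∧ (∀ x ∈ S, E x = e x) ∧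
      ∀ x y : X, ∀ l : ℝ, E (l • x + (1 - l) • y) = l * E x + (1 - l) * E y := by
  obtain ⟨g, hg⟩ := exists_linear_of_affine hS he hx₀
  set f : V →ₗ[ℝ] ℝ := g.domRestrict V with hf
  have hbdd : Bornology.IsBounded (f '' (((↑) : V → X) ⁻¹' S)) := by
    apply (Metric.isBounded_Icc (g x₀ - e x₀) (g x₀ - e x₀ + 1)).subset
    rintro y ⟨v, hv, rfl⟩
    have hvS : (v : X) ∈ S := hv
    have := hg (v : X) hvS
    have hb := hbd (v : X) hvS
    simp only [Set.mem_Icc] at hb ⊢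
    constructor
    · simp only [hf, LinearMap.domRestrict_apply]; linarith [hb.1]
    · simp only [hf, LinearMap.domRestrict_apply]; linarith [hb.2]
  have hfc : Continuous f := hVcont f hbdd
  letI : UniformSpace X := IsTopologicalAddGroup.rightUniformSpace X
  haveI : IsUniformAddGroup X := isUniformAddGroup_of_addCommGroup
  haveI : IsUniformAddGroup V := inferInstanceAs (IsUniformAddGroup V.toAddSubgroup)
  set fc : V →L[ℝ] ℝ := ⟨f, hfc⟩ with hfcdef
  have huc : UniformContinuous (fc : V → ℝ) := fc.uniformContinuous
  have hui : IsUniformInducing ((↑) : V → X) := isUniformEmbedding_subtype_val.isUniformInducing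
  have hdr : DenseRange ((↑) : V → X) := hVdense.denseRange_val
  set E₀ : X → ℝ := (hui.isDenseInducing hdr).extend (fc : V → ℝ) with hE₀
  have hE₀c : Continuous E₀ := (uniformContinuous_uniformly_extend hui hdr huc).continuous
  have hE₀eq : ∀ v : V, E₀ (v : X) = f v := fun v => uniformly_extend_of_ind hui hdr huc v
  -- additivity by density
  have hadd : ∀ x y : X, E₀ (x + y) = E₀ x + E₀ y := by
    have heq : (fun q : X × X => E₀ (q.1 + q.2)) = fun q : X × X => E₀ q.1 + E₀ q.2 := by
      apply Continuous.ext_on ((hVdense.prod hVdense))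
      · exact hE₀c.comp (continuous_fst.add continuous_snd)
      · exact (hE₀c.comp continuous_fst).add (hE₀c.comp continuous_snd)
      · rintro ⟨x, y⟩ ⟨hx, hy⟩
        have h1 : E₀ (x + y) = f (⟨x, hx⟩ + ⟨y, hy⟩) := hE₀eq (⟨x, hx⟩ + ⟨y, hy⟩)
        have h2 : E₀ x = f ⟨x, hx⟩ := hE₀eq ⟨x, hx⟩
        have h3 : E₀ y = f ⟨y, hy⟩ := hE₀eq ⟨y, hy⟩
        simp only []
        rw [h1, h2, h3, map_add]
    intro x y
    exact congrFun heq (x, y)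
  have hsmul : ∀ (l : ℝ) (x : X), E₀ (l • x) = l * E₀ x := by
    intro l
    have heq : (fun x : X => E₀ (l • x)) = fun x : X => l * E₀ x := by
      apply Continuous.ext_on hVdense
      · exact hE₀c.comp (continuous_const_smul l)
      · exact continuous_const.mul hE₀c
      · intro x hx
        have h1 : E₀ (l • x) = f (l • (⟨x, hx⟩ : V)) := hE₀eq (l • ⟨x, hx⟩)
        have h2 : E₀ x = f ⟨x, hx⟩ := hE₀eq ⟨x, hx⟩
        simp only []
        rw [h1, h2, map_smul, smul_eq_mul]
    intro x
    exact congrFun heq x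
  refine ⟨fun x => E₀ x + (e x₀ - E₀ x₀), ?_, ?_, ?_⟩
  · exact hE₀c.add continuous_const
  · intro x hx
    have h2 : E₀ x = g x := hE₀eq ⟨x, hSV hx⟩
    have h3 : E₀ x₀ = g x₀ := hE₀eq ⟨x₀, hSV hx₀⟩
    have := hg x hx
    show E₀ x + (e x₀ - E₀ x₀) = e x
    rw [h2, h3]
    linarith
  · intro x y l
    show E₀ (l • x + (1 - l) • y) + (e x₀ - E₀ x₀)
      = l * (E₀ x + (e x₀ - E₀ x₀)) + (1 - l) * (E₀ y + (e x₀ - E₀ x₀))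
    rw [hadd, hsmul, hsmul]
    ring
end TopExt

/-- Weak Helstrom family bound: if there are `ρ ≥ max p i`, conjugate states `t i` and a
reference state `sref` in `S̃` with `(p i / ρ) • s i + (1 − p i / ρ) • t i = sref`, then
every observable's success probability (hence the optimal one) is at most `ρ`. -/
theorem weak_helstrom_bound {X : Type*} [AddCommGroup X] [Module ℝ X]
    [TopologicalSpace X] [IsTopologicalAddGroup X] [ContinuousSMul ℝ X]
    [LocallyConvexSpace ℝ X] [T2Space X]
    (S Stilde : Set X) (hS : Convex ℝ S) (hSt : Convex ℝ Stilde)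
    (hcomp : IsCompact Stilde) (hcl : closure S = Stilde)
    (V : Submodule ℝ X) (hSV : S ⊆ (V : Set X)) (hVdense : Dense (V : Set X))
    (hVcont : ∀ f : V →ₗ[ℝ] ℝ,
      Bornology.IsBounded (f '' (((↑) : V → X) ⁻¹' S)) → Continuous f)
    (N : ℕ) (s : Fin N → X) (hs : ∀ i, s i ∈ S)
    (p : Fin N → ℝ) (hp : ∀ i, 0 < p i) (hp1 : (∑ i, p i) = 1)
    (ρ : ℝ) (hρ : ∀ i, p i ≤ ρ)
    (t : Fin N → X) (htS : ∀ i, t i ∈ Stilde)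
    (sref : X) (hsref : sref ∈ Stilde)
    (hfam : ∀ i, (p i / ρ) • s i + (1 - p i / ρ) • t i = sref) :
    ∀ e : Fin N → X → ℝ, IsObservableOn S e → (∑ i, p i * e i (s i)) ≤ ρ := by
  intro e heobs
  obtain ⟨heff, hsum⟩ := heobs
  rcases Nat.eq_zero_or_pos N with h0 | hN
  · subst h0; simp at hp1
  set i₀ : Fin N := ⟨0, hN⟩ with hi₀
  have hρ0 : 0 < ρ := lt_of_lt_of_le (hp i₀) (hρ i₀)
  have hx₀ : s i₀ ∈ S := hs i₀
  -- continuous affine extensions of the effects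
  choose E hEc hEeq hEaff using fun i =>
    exists_cont_affine_ext S hS V hSV hVdense hVcont (heff i).1 (heff i).2 hx₀
  -- extensions take values in [0,1] on Stilde and sum to 1 on Stilde
  have hE01 : ∀ i, ∀ x ∈ Stilde, E i x ∈ Set.Icc (0:ℝ) 1 := by
    intro i x hx
    rw [← hcl] at hx
    have hclosed : IsClosed (E i ⁻¹' Set.Icc (0:ℝ) 1) := IsClosed.preimage (hEc i) isClosed_Icc
    have hsub : S ⊆ E i ⁻¹' Set.Icc (0:ℝ) 1 := by
      intro y hy
      have := (heff i).2 y hy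
      simp only [Set.mem_preimage, hEeq i y hy]
      exact this
    exact closure_minimal hsub hclosed hx
  have hsum1 : ∀ x ∈ Stilde, (∑ i, E i x) = 1 := by
    intro x hx
    rw [← hcl] at hx
    have hclosed : IsClosed {y : X | (∑ i, E i y) = 1} := by
      have : Continuous fun y : X => ∑ i, E i y := continuous_finset_sum _ fun i _ => hEc i
      exact isClosed_eq this continuous_const
    have hsub : S ⊆ {y : X | (∑ i, E i y) = 1} := by
      intro y hy
      have := hsum y hy
      simp only [Set.mem_setOf_eq]
      rw [Finset.sum_congr rfl fun i _ => hEeq i y hy]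
      exact this
    exact closure_minimal hsub hclosed hx
  -- key pointwise bound
  have key : ∀ i, p i * e i (s i) ≤ ρ * E i sref := by
    intro i
    have h1 := hEaff i (s i) (t i) (p i / ρ)
    rw [hfam i] at h1
    have hes : E i (s i) = e i (s i) := hEeq i _ (hs i)
    have ht0 : 0 ≤ E i (t i) := (hE01 i _ (htS i)).1
    have hc : ρ * (p i / ρ) = p i := by field_simp
    have h2 : ρ * E i sref = p i * E i (s i) + (ρ - p i) * E i (t i) := by
      rw [h1]
      linear_combination (E i (s i) - E i (t i)) * hc
    have h3 : 0 ≤ (ρ - p i) * E i (t i) := mul_nonneg (sub_nonneg.2 (hρ i)) ht0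
    rw [← hes]
    linarith
  calc (∑ i, p i * e i (s i)) ≤ ∑ i, ρ * E i sref := Finset.sum_le_sum fun i _ => key i
    _ = ρ * ∑ i, E i sref := by rw [Finset.mul_sum]
    _ = ρ := by rw [hsum1 sref hsref, mul_one]
end

section
/- Let ((p̃_i, s_i; 1−p̃_i, t_i))_{i=1}^N be a weak Helstrom family with Helstrom ratio p (so p̃_i = p_i/p and p̃_i s_i + (1−p̃_i) t_i = s for all i). If there exists an observable O = (e_1,...,e_N) such that ẽ_i(t_i) = 0 for every i, then P_succ(O) = P_succ = p; in particular the family is a Helstrom family and O is optimal. -/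
section Aux

variable {X : Type*} [AddCommGroup X] [Module ℝ X]

private lemma affine_welldef {S : Set X} (hS : Convex ℝ S) {f : X → ℝ}
    (haff : IsAffineOn S f)
    {r r' : ℝ} {a b a' b' : X} (hr : 0 ≤ r) (hr' : 0 ≤ r')
    (ha : a ∈ S) (hb : b ∈ S) (ha' : a' ∈ S) (hb' : b' ∈ S)
    (hEq : r • (a - b) = r' • (a' - b')) :
    r * (f a - f b) = r' * (f a' - f b') := by
  rcases eq_or_lt_of_le (add_nonneg hr hr' : (0:ℝ) ≤ r + r') with hm | hm
  · have h1 : r = 0 := by linarith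
    have h2 : r' = 0 := by linarith
    simp [h1, h2]
  · set m := r + r' with hm_def
    have hm0 : m ≠ 0 := ne_of_gt hm
    have h1 : r • a + r' • b' = r' • a' + r • b := by
      rw [smul_sub, smul_sub] at hEq
      exact sub_eq_sub_iff_add_eq_add.mp hEq
    have key : (r/m) • a + (r'/m) • b' = (r'/m) • a' + (r/m) • b := by
      have hinj : ∀ u v : X, m • u = m • v → u = v := by
        intro u v h
        have := congrArg (fun z => m⁻¹ • z) h
        simpa [smul_smul, inv_mul_cancel₀ hm0] using this
      apply hinj
      have e1 : m • ((r/m) • a + (r'/m) • b') = r • a + r' • b' := by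
        match_scalars <;> field_simp <;> ring
      have e2 : m • ((r'/m) • a' + (r/m) • b) = r' • a' + r • b := by
        match_scalars <;> field_simp <;> ring
      rw [e1, e2, h1]
    have hr1 : 0 ≤ r / m := div_nonneg hr hm.le
    have hr2 : r / m ≤ 1 := by rw [div_le_one hm]; linarith
    have hr1' : 0 ≤ r' / m := div_nonneg hr' hm.le
    have hr2' : r' / m ≤ 1 := by rw [div_le_one hm]; linarith
    have hca : (1:ℝ) - r/m = r'/m := by field_simp [hm_def]; linarith
    have hca' : (1:ℝ) - r'/m = r/m := by field_simp [hm_def]; linarith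
    have A1 := haff a ha b' hb' (r/m) hr1 hr2
    rw [hca] at A1
    have A2 := haff a' ha' b hb (r'/m) hr1' hr2'
    rw [hca'] at A2
    rw [key, A2] at A1
    have hA := A1
    field_simp at hA
    -- hA should be linear relation; finish
    nlinarith [hA]

end Aux

section Lin

variable {X : Type*} [AddCommGroup X] [Module ℝ X]

private lemma exists_linear {S : Set X} (hS : Convex ℝ S) (V : Submodule ℝ X)
    (hSV : S ⊆ (V : Set X)) {f : X → ℝ} (haff : IsAffineOn S f)
    {x₀ : X} (hx₀ : x₀ ∈ S) :
    ∃ (F : V →ₗ[ℝ] ℝ) (c : ℝ), ∀ v : V, (v : X) ∈ S → f v = F v + c := by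
  classical
  -- combination of two representations
  have hcomb : ∀ (r₁ r₂ : ℝ) (a₁ b₁ a₂ b₂ : X), 0 ≤ r₁ → 0 ≤ r₂ →
      a₁ ∈ S → b₁ ∈ S → a₂ ∈ S → b₂ ∈ S →
      ∃ r₃ a₃ b₃, 0 ≤ r₃ ∧ a₃ ∈ S ∧ b₃ ∈ S ∧
        r₁ • (a₁ - b₁) + r₂ • (a₂ - b₂) = r₃ • (a₃ - b₃) ∧
        r₃ * (f a₃ - f b₃) = r₁ * (f a₁ - f b₁) + r₂ * (f a₂ - f b₂) := by
    intro r₁ r₂ a₁ b₁ a₂ b₂ hr₁ hr₂ ha₁ hb₁ ha₂ hb₂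
    rcases eq_or_lt_of_le (add_nonneg hr₁ hr₂ : (0:ℝ) ≤ r₁ + r₂) with hm | hm
    · have h1 : r₁ = 0 := by linarith
      have h2 : r₂ = 0 := by linarith
      exact ⟨0, a₁, b₁, le_refl _, ha₁, hb₁, by simp [h1, h2], by simp [h1, h2]⟩
    · set m := r₁ + r₂ with hm_def
      have hm0 : m ≠ 0 := ne_of_gt hm
      have hd1 : 0 ≤ r₁ / m := div_nonneg hr₁ hm.le
      have hd2 : 0 ≤ r₂ / m := div_nonneg hr₂ hm.le
      have hsum : r₁ / m + r₂ / m = 1 := by field_simp; linarith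
      have hca : (1:ℝ) - r₁/m = r₂/m := by field_simp [hm_def]; linarith
      have hle : r₁ / m ≤ 1 := by rw [div_le_one hm]; linarith
      refine ⟨m, (r₁/m) • a₁ + (r₂/m) • a₂, (r₁/m) • b₁ + (r₂/m) • b₂,
        hm.le, hS ha₁ ha₂ hd1 hd2 hsum, hS hb₁ hb₂ hd1 hd2 hsum, ?_, ?_⟩
      · match_scalars <;> field_simp <;> ring
      · have e₁ := haff a₁ ha₁ a₂ ha₂ (r₁/m) hd1 hle
        rw [hca] at e₁
        have e₂ := haff b₁ hb₁ b₂ hb₂ (r₁/m) hd1 hle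
        rw [hca] at e₂
        rw [e₁, e₂]
        field_simp
        ring
  -- the submodule of scaled differences
  let pred : V → Prop := fun v => ∃ (r : ℝ) (a b : X), 0 ≤ r ∧ a ∈ S ∧ b ∈ S ∧ (v : X) = r • (a - b)
  have hpred_add : ∀ v₁ v₂ : V, pred v₁ → pred v₂ → pred (v₁ + v₂) := by
    rintro v₁ v₂ ⟨r₁, a₁, b₁, hr₁, ha₁, hb₁, h₁⟩ ⟨r₂, a₂, b₂, hr₂, ha₂, hb₂, h₂⟩
    obtain ⟨r₃, a₃, b₃, h0, ha₃, hb₃, hvec, -⟩ :=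
      hcomb r₁ r₂ a₁ b₁ a₂ b₂ hr₁ hr₂ ha₁ hb₁ ha₂ hb₂
    exact ⟨r₃, a₃, b₃, h0, ha₃, hb₃, by rw [Submodule.coe_add, h₁, h₂, hvec]⟩
  have hpred_smul : ∀ (c : ℝ) (v : V), pred v → pred (c • v) := by
    rintro c v ⟨r, a, b, hr, ha, hb, h⟩
    rcases le_or_gt 0 c with hc | hc
    · refine ⟨c * r, a, b, mul_nonneg hc hr, ha, hb, ?_⟩
      rw [Submodule.coe_smul, h, smul_smul]
    · refine ⟨-(c * r), b, a, by nlinarith, hb, ha, ?_⟩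
      rw [Submodule.coe_smul, h]
      module
  let D : Submodule ℝ V :=
    { carrier := {v : V | pred v}
      add_mem' := fun h₁ h₂ => hpred_add _ _ h₁ h₂
      zero_mem' := ⟨0, x₀, x₀, le_refl _, hx₀, hx₀, by simp⟩
      smul_mem' := fun c v h => hpred_smul c v h }
  have hrep : ∀ d : D, pred (d : V) := fun d => d.2
  choose rr aa bb hr ha hb hd using hrep
  have key : ∀ (d : D) (r' : ℝ) (a' b' : X), 0 ≤ r' → a' ∈ S → b' ∈ S →
      ((d : V) : X) = r' • (a' - b') →
      rr d * (f (aa d) - f (bb d)) = r' * (f a' - f b') := by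
    intro d r' a' b' h1 h2 h3 h4
    exact affine_welldef hS haff (hr d) h1 (ha d) (hb d) h2 h3 ((hd d).symm.trans h4)
  let L : D →ₗ[ℝ] ℝ :=
    { toFun := fun d => rr d * (f (aa d) - f (bb d))
      map_add' := by
        intro d₁ d₂
        obtain ⟨r₃, a₃, b₃, h0, ha₃, hb₃, hvec, hval⟩ :=
          hcomb (rr d₁) (rr d₂) (aa d₁) (bb d₁) (aa d₂) (bb d₂)
            (hr d₁) (hr d₂) (ha d₁) (hb d₁) (ha d₂) (hb d₂)
        have hco : (((d₁ + d₂ : D) : V) : X) = r₃ • (a₃ - b₃) := by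
          have : (((d₁ + d₂ : D) : V) : X) = ((d₁ : V) : X) + ((d₂ : V) : X) := by
            norm_cast
          rw [this, hd d₁, hd d₂, hvec]
        exact (key (d₁ + d₂) r₃ a₃ b₃ h0 ha₃ hb₃ hco).trans hval
      map_smul' := by
        intro c d
        simp only [RingHom.id_apply, smul_eq_mul]
        rcases le_or_gt 0 c with hc | hc
        · have hco : (((c • d : D) : V) : X) = (c * rr d) • (aa d - bb d) := by
            have : (((c • d : D) : V) : X) = c • ((d : V) : X) := by norm_cast
            rw [this, hd d, smul_smul]
          rw [key (c • d) (c * rr d) (aa d) (bb d) (mul_nonneg hc (hr d)) (ha d) (hb d) hco]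
          ring
        · have hco : (((c • d : D) : V) : X) = (-(c * rr d)) • (bb d - aa d) := by
            have : (((c • d : D) : V) : X) = c • ((d : V) : X) := by norm_cast
            rw [this, hd d]
            module
          rw [key (c • d) (-(c * rr d)) (bb d) (aa d) (by nlinarith [hr d]) (hb d) (ha d) hco]
          ring }
  obtain ⟨F, hF⟩ := LinearMap.exists_extend L
  set x₀v : V := ⟨x₀, hSV hx₀⟩ with hx₀v
  refine ⟨F, f x₀ - F x₀v, ?_⟩
  intro v hv
  have hmem : v - x₀v ∈ D := ⟨1, (v : X), x₀, zero_le_one, hv, hx₀, by simp [hx₀v]⟩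
  have hL : L ⟨v - x₀v, hmem⟩ = f v - f x₀ := by
    have h2 := key ⟨v - x₀v, hmem⟩ 1 (v : X) x₀ zero_le_one hv hx₀ (by simp [hx₀v])
    simp only [one_mul] at h2
    exact h2
  have h3 : F (v - x₀v) = f v - f x₀ := by
    have := congrArg (fun (L' : D →ₗ[ℝ] ℝ) => L' ⟨v - x₀v, hmem⟩) hF
    simp only [LinearMap.comp_apply, Submodule.subtype_apply] at this
    rw [← hL]
    exact this.symm ▸ rfl
  rw [map_sub] at h3
  linarith [h3]

end Lin

section Top

open Filter Topology

private lemma exists_cont_extension {X : Type*} [AddCommGroup X] [Module ℝ X]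
    [TopologicalSpace X] [IsTopologicalAddGroup X] [T2Space X]
    (V : Submodule ℝ X) (hVdense : Dense (V : Set X))
    {F : V →ₗ[ℝ] ℝ} (hFcont : Continuous F) (c : ℝ) :
    ∃ φ : X → ℝ, Continuous φ ∧ ∀ v : ↥V, φ v = F v + c := by
  letI : UniformSpace X := IsTopologicalAddGroup.rightUniformSpace X
  haveI : IsUniformAddGroup X := isUniformAddGroup_of_addCommGroup
  haveI : IsUniformAddGroup ↥V :=
    IsUniformInducing.isUniformAddGroup (V.subtype)
      isUniformEmbedding_subtype_val.isUniformInducing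
  have hUCF : UniformContinuous (F : ↥V → ℝ) :=
    uniformContinuous_addMonoidHom_of_continuous (f := F.toAddMonoidHom) hFcont
  have hUC : UniformContinuous (fun v : ↥V => F v + c) :=
    hUCF.add uniformContinuous_const
  have hUI : IsUniformInducing ((↑) : ↥V → X) :=
    isUniformEmbedding_subtype_val.isUniformInducing
  have hDR : DenseRange ((↑) : ↥V → X) := hVdense.denseRange_val
  refine ⟨(hUI.isDenseInducing hDR).extend (fun v : ↥V => F v + c),
    (uniformContinuous_uniformly_extend hUI hDR hUC).continuous,
    fun v => uniformly_extend_of_ind hUI hDR hUC v⟩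

variable {X : Type*} [AddCommGroup X] [Module ℝ X] [TopologicalSpace X]
  [IsTopologicalAddGroup X] [ContinuousSMul ℝ X] [T2Space X]

private lemma exists_virtual_extension {S Stilde : Set X} (hS : Convex ℝ S)
    (hcl : closure S = Stilde) (V : Submodule ℝ X) (hSV : S ⊆ (V : Set X))
    (hVdense : Dense (V : Set X))
    (hVcont : ∀ F : V →ₗ[ℝ] ℝ,
      Bornology.IsBounded (F '' (((↑) : V → X) ⁻¹' S)) → Continuous F)
    {f : X → ℝ} (haff : IsAffineOn S f) (hbdd : ∀ x ∈ S, f x ∈ Set.Icc (0:ℝ) 1)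
    {x₀ : X} (hx₀ : x₀ ∈ S) :
    ∃ φ : X → ℝ, Continuous φ ∧ (∀ x ∈ S, φ x = f x) ∧ IsAffineOn Stilde φ ∧
      ∀ x ∈ Stilde, φ x ∈ Set.Icc (0:ℝ) 1 := by
  obtain ⟨F, c, hFc⟩ := exists_linear hS V hSV haff hx₀
  have hFb : Bornology.IsBounded (F '' (((↑) : V → X) ⁻¹' S)) := by
    refine (Metric.isBounded_Icc (-c) (1 - c)).subset ?_
    rintro y ⟨v, hv, rfl⟩
    have h1 := hFc v hv
    obtain ⟨h2a, h2b⟩ := hbdd _ hv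
    rw [Set.mem_Icc]
    constructor <;> linarith
  have hFcont : Continuous F := hVcont F hFb
  obtain ⟨φ, hφc, hφv⟩ := exists_cont_extension V hVdense hFcont c
  have hφS : ∀ x ∈ S, φ x = f x := by
    intro x hx
    have h1 := hφv ⟨x, hSV hx⟩
    have h2 := hFc ⟨x, hSV hx⟩ hx
    simpa [← h2] using h1
  have hSsub : S ⊆ Stilde := hcl ▸ subset_closure
  have hφaff : IsAffineOn Stilde φ := by
    intro x hx y hy l hl0 hl1
    have hG1 : Continuous (fun q : X × X => φ (l • q.1 + (1 - l) • q.2)) :=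
      hφc.comp ((continuous_const.smul continuous_fst).add
        (continuous_const.smul continuous_snd))
    have hG2 : Continuous (fun q : X × X => l * φ q.1 + (1 - l) * φ q.2) :=
      ((continuous_const.mul (hφc.comp continuous_fst)).add
        (continuous_const.mul (hφc.comp continuous_snd)))
    have hEqOn : Set.EqOn (fun q : X × X => φ (l • q.1 + (1 - l) • q.2))
        (fun q : X × X => l * φ q.1 + (1 - l) * φ q.2) (S ×ˢ S) := by
      rintro ⟨u, w⟩ ⟨hu, hw⟩
      have hmemS : l • u + (1 - l) • w ∈ S := hS hu hw hl0 (by linarith) (by ring)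
      simp only
      rw [hφS _ hmemS, hφS _ hu, hφS _ hw]
      exact haff u hu w hw l hl0 hl1
    have hclosed := hEqOn.closure hG1 hG2
    have hmem : (x, y) ∈ closure (S ×ˢ S) := by
      rw [closure_prod_eq, hcl]
      exact ⟨hx, hy⟩
    exact hclosed hmem
  have hφI : ∀ x ∈ Stilde, φ x ∈ Set.Icc (0:ℝ) 1 := by
    have hclosed : IsClosed {x : X | φ x ∈ Set.Icc (0:ℝ) 1} :=
      IsClosed.preimage hφc isClosed_Icc
    have hsub : closure S ⊆ {x : X | φ x ∈ Set.Icc (0:ℝ) 1} :=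
      closure_minimal (fun x hx => by
        simp only [Set.mem_setOf_eq]
        rw [hφS x hx]; exact hbdd x hx) hclosed
    intro x hx
    exact hsub (hcl ▸ hx)
  exact ⟨φ, hφc, hφS, hφaff, hφI⟩

end Top

section Main

open Filter Topology

private lemma eq_const_on_of_dense {Y : Type*} [TopologicalSpace Y] {S T : Set Y}
    {f : Y → ℝ} {c : ℝ} (hST : S ⊆ T) (hT : T ⊆ closure S)
    (hf : ContinuousOn f T) (h : ∀ x ∈ S, f x = c) : ∀ x ∈ T, f x = c := by
  intro x hx
  haveI hne : (nhdsWithin x S).NeBot :=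
    mem_closure_iff_nhdsWithin_neBot.mp (hT hx)
  have h1 : Tendsto f (nhdsWithin x S) (nhds (f x)) :=
    (hf x hx).mono hST
  have h2 : Tendsto f (nhdsWithin x S) (nhds c) := by
    refine Tendsto.congr' ?_ tendsto_const_nhds
    filter_upwards [self_mem_nhdsWithin] with y hy
    exact (h y hy).symm
  exact tendsto_nhds_unique h1 h2

end Main

/-- Sufficient condition for a weak Helstrom family to be a Helstrom family: if an
observable `(e i)` has continuous affine extensions `(g i)` to `S̃` with
`g i (t i) = 0` for every `i`, then its success probability equals `ρ` and is optimal: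
`P_succ(O) = P_succ = ρ`. -/
theorem helstrom_sufficient {X : Type*} [AddCommGroup X] [Module ℝ X]
    [TopologicalSpace X] [IsTopologicalAddGroup X] [ContinuousSMul ℝ X]
    [LocallyConvexSpace ℝ X] [T2Space X]
    (S Stilde : Set X) (hS : Convex ℝ S) (hSt : Convex ℝ Stilde)
    (hcomp : IsCompact Stilde) (hcl : closure S = Stilde)
    (V : Submodule ℝ X) (hSV : S ⊆ (V : Set X)) (hVdense : Dense (V : Set X))
    (hVcont : ∀ f : V →ₗ[ℝ] ℝ,
      Bornology.IsBounded (f '' (((↑) : V → X) ⁻¹' S)) → Continuous f)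
    (N : ℕ) (s : Fin N → X) (hs : ∀ i, s i ∈ S)
    (p : Fin N → ℝ) (hp : ∀ i, 0 < p i) (hp1 : (∑ i, p i) = 1)
    (ρ : ℝ) (hρ : ∀ i, p i ≤ ρ)
    (t : Fin N → X) (htS : ∀ i, t i ∈ Stilde)
    (sref : X) (hsref : sref ∈ Stilde)
    (hfam : ∀ i, (p i / ρ) • s i + (1 - p i / ρ) • t i = sref)
    (e : Fin N → X → ℝ) (hobs : IsObservableOn S e)
    (g : Fin N → X → ℝ) (hg : ∀ i, IsVirtualEffect Stilde (g i))
    (hext : ∀ i, Set.EqOn (e i) (g i) S)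
    (hzero : ∀ i, g i (t i) = 0) :
    (∑ i, p i * e i (s i)) = ρ ∧
      ∀ e' : Fin N → X → ℝ, IsObservableOn S e' → (∑ i, p i * e' i (s i)) ≤ ρ := by
  have hN : 0 < N := by
    rcases Nat.eq_zero_or_pos N with h | h
    · subst h; simp at hp1
    · exact h
  have i₀ : Fin N := ⟨0, hN⟩
  have hρpos : (0:ℝ) < ρ := lt_of_lt_of_le (hp i₀) (hρ i₀)
  have hρ0 : ρ ≠ 0 := ne_of_gt hρpos
  have hSsub : S ⊆ Stilde := hcl ▸ subset_closure
  have hTsub : Stilde ⊆ closure S := hcl ▸ subset_rfl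
  have hlam0 : ∀ i, 0 ≤ p i / ρ := fun i => div_nonneg (hp i).le hρpos.le
  have hlam1 : ∀ i, p i / ρ ≤ 1 := fun i => (div_le_one hρpos).mpr (hρ i)
  constructor
  · -- equality part
    have hg1 : ∀ x ∈ S, (∑ i, g i x) = 1 := by
      intro x hx
      rw [← hobs.2 x hx]
      exact Finset.sum_congr rfl fun i _ => (hext i hx).symm
    have hgc : ContinuousOn (fun x => ∑ i, g i x) Stilde :=
      continuousOn_finset_sum _ fun i _ => (hg i).1
    have hsum1 : (∑ i, g i sref) = 1 :=
      eq_const_on_of_dense hSsub hTsub hgc hg1 sref hsref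
    have hkey : ∀ i, p i * g i (s i) = ρ * g i sref := by
      intro i
      have haffg := (hg i).2.1 (s i) (hSsub (hs i)) (t i) (htS i)
        (p i / ρ) (hlam0 i) (hlam1 i)
      rw [hfam i, hzero i] at haffg
      rw [haffg]
      field_simp
      ring
    calc (∑ i, p i * e i (s i)) = ∑ i, p i * g i (s i) :=
          Finset.sum_congr rfl fun i _ => by rw [hext i (hs i)]
      _ = ∑ i, ρ * g i sref := Finset.sum_congr rfl fun i _ => hkey i
      _ = ρ * ∑ i, g i sref := by rw [Finset.mul_sum]
      _ = ρ := by rw [hsum1, mul_one]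
  · -- optimality part
    intro e' hobs'
    choose φ hφc hφS hφaff hφI using fun i =>
      exists_virtual_extension hS hcl V hSV hVdense hVcont
        (hobs'.1 i).1 (hobs'.1 i).2 (hs i₀)
    have hsum1 : (∑ i, φ i sref) = 1 := by
      have hφ1 : ∀ x ∈ S, (∑ i, φ i x) = 1 := by
        intro x hx
        rw [← hobs'.2 x hx]
        exact Finset.sum_congr rfl fun i _ => hφS i x hx
      have hφcS : ContinuousOn (fun x => ∑ i, φ i x) Stilde :=
        continuousOn_finset_sum _ fun i _ => (hφc i).continuousOn
      exact eq_const_on_of_dense hSsub hTsub hφcS hφ1 sref hsref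
    have hb : ∀ i ∈ Finset.univ, p i * e' i (s i) ≤ ρ * φ i sref := by
      intro i _
      have haffφ := hφaff i (s i) (hSsub (hs i)) (t i) (htS i)
        (p i / ρ) (hlam0 i) (hlam1 i)
      rw [hfam i] at haffφ
      have ht0 : 0 ≤ φ i (t i) := (hφI i _ (htS i)).1
      have hsix : e' i (s i) = φ i (s i) := (hφS i _ (hs i)).symm
      rw [hsix, haffφ]
      have h1 : ρ * (p i / ρ * φ i (s i) + (1 - p i / ρ) * φ i (t i))
          = p i * φ i (s i) + ρ * (1 - p i / ρ) * φ i (t i) := by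
        field_simp
      rw [h1]
      have h2 : 0 ≤ ρ * (1 - p i / ρ) * φ i (t i) :=
        mul_nonneg (mul_nonneg hρpos.le (by linarith [hlam1 i])) ht0
      linarith
    calc (∑ i, p i * e' i (s i)) ≤ ∑ i, ρ * φ i sref := Finset.sum_le_sum hb
      _ = ρ * ∑ i, φ i sref := by rw [Finset.mul_sum]
      _ = ρ := by rw [hsum1, mul_one]
end

section
/- Let ((p̃_i, s_i; 1−p̃_i, t_i))_{i=1}^N be a Helstrom family (weak Helstrom family with ratio p = P_succ), and assume the case is generic, i.e., P_succ > max_i p_i. Then every optimal observable O = (e_1,...,e_N) satisfies ẽ_i(t_i) = 0 for every i. -/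
/-- Necessary condition: for a Helstrom family (weak Helstrom family whose ratio `ρ`
equals the optimal success probability) in a generic case (`ρ > p i` for all `i`), any
optimal observable `(e i)` (one with success probability `ρ`) with continuous affine
extensions `(g i)` satisfies `g i (t i) = 0` for every `i`. -/
theorem helstrom_necessary {X : Type*} [AddCommGroup X] [Module ℝ X]
    [TopologicalSpace X] [IsTopologicalAddGroup X] [ContinuousSMul ℝ X]
    [LocallyConvexSpace ℝ X] [T2Space X]
    (S Stilde : Set X) (hS : Convex ℝ S) (hSt : Convex ℝ Stilde)
    (hcomp : IsCompact Stilde) (hcl : closure S = Stilde)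
    (V : Submodule ℝ X) (hSV : S ⊆ (V : Set X)) (hVdense : Dense (V : Set X))
    (hVcont : ∀ f : V →ₗ[ℝ] ℝ,
      Bornology.IsBounded (f '' (((↑) : V → X) ⁻¹' S)) → Continuous f)
    (N : ℕ) (s : Fin N → X) (hs : ∀ i, s i ∈ S)
    (p : Fin N → ℝ) (hp : ∀ i, 0 < p i) (hp1 : (∑ i, p i) = 1)
    (ρ : ℝ) (hρ : ∀ i, p i ≤ ρ)
    (t : Fin N → X) (htS : ∀ i, t i ∈ Stilde)
    (sref : X) (hsref : sref ∈ Stilde)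
    (hfam : ∀ i, (p i / ρ) • s i + (1 - p i / ρ) • t i = sref)
    (hgen : ∀ i, p i < ρ)
    (e : Fin N → X → ℝ) (hobs : IsObservableOn S e)
    (g : Fin N → X → ℝ) (hg : ∀ i, IsVirtualEffect Stilde (g i))
    (hext : ∀ i, Set.EqOn (e i) (g i) S)
    (hopt : (∑ i, p i * e i (s i)) = ρ) :
    ∀ i, g i (t i) = 0 := by
  have hSsub : S ⊆ Stilde := hcl ▸ subset_closure
  -- N must be positive-free: we argue per index, but first get global facts
  -- success prob per index decomposition
  have hρpos : ∀ i : Fin N, 0 < ρ := fun i => (hp i).trans_le (hρ i)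
  have hdecomp : ∀ j : Fin N, g j sref =
      (p j / ρ) * e j (s j) + (1 - p j / ρ) * g j (t j) := by
    intro j
    have hl0 : 0 ≤ p j / ρ := div_nonneg (hp j).le (hρpos j).le
    have hl1 : p j / ρ ≤ 1 := (div_le_one (hρpos j)).mpr (hρ j)
    have haff := (hg j).2.1 (s j) (hSsub (hs j)) (t j) (htS j) (p j / ρ) hl0 hl1
    rw [hfam j] at haff
    rw [haff, hext j (hs j)]
  -- sum of extensions at sref equals 1
  have hsum1 : (∑ j, g j sref) = 1 := by
    have hcont : ContinuousOn (fun x => ∑ j, g j x) Stilde :=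
      continuousOn_finset_sum _ fun j _ => (hg j).1
    have hsrefcl : sref ∈ closure S := hcl ▸ hsref
    have hne : (nhdsWithin sref S).NeBot :=
      mem_closure_iff_nhdsWithin_neBot.mp hsrefcl
    have h1 : Filter.Tendsto (fun x => ∑ j, g j x) (nhdsWithin sref S)
        (nhds (∑ j, g j sref)) :=
      ((hcont sref hsref).mono hSsub)
    have h2 : Filter.Tendsto (fun x => ∑ j, g j x) (nhdsWithin sref S)
        (nhds (1 : ℝ)) := by
      refine Filter.Tendsto.congr' ?_ tendsto_const_nhds
      filter_upwards [self_mem_nhdsWithin] with x hx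
      rw [← hobs.2 x hx]
      exact Finset.sum_congr rfl fun j _ => hext j hx
    exact tendsto_nhds_unique h1 h2
  -- sum of the first parts equals 1
  have hfirst : (∑ j, (p j / ρ) * e j (s j)) = 1 := by
    have : (∑ j, (p j / ρ) * e j (s j)) = (∑ j, p j * e j (s j)) / ρ := by
      rw [Finset.sum_div]
      exact Finset.sum_congr rfl fun j _ => by ring
    rcases (Finset.univ : Finset (Fin N)).eq_empty_or_nonempty with h | h
    · exfalso
      rw [h, Finset.sum_empty] at hp1
      norm_num at hp1
    · obtain ⟨j, _⟩ := h
      rw [this, hopt, div_self (hρpos j).ne']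
  have hzero : (∑ j, (1 - p j / ρ) * g j (t j)) = 0 := by
    have := hsum1
    calc (∑ j, (1 - p j / ρ) * g j (t j))
        = (∑ j, g j sref) - (∑ j, (p j / ρ) * e j (s j)) := by
          rw [← Finset.sum_sub_distrib]
          exact Finset.sum_congr rfl fun j _ => by rw [hdecomp j]; ring
      _ = 0 := by rw [hsum1, hfirst]; ring
  intro i
  have hnn : ∀ j ∈ Finset.univ, 0 ≤ (1 - p j / ρ) * g j (t j) := by
    intro j _
    have h1 : 0 ≤ 1 - p j / ρ := by
      have : p j / ρ ≤ 1 := (div_le_one (hρpos j)).mpr (hρ j)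
      linarith
    exact mul_nonneg h1 ((hg j).2.2 (t j) (htS j)).1
  have heach := (Finset.sum_eq_zero_iff_of_nonneg hnn).mp hzero i (Finset.mem_univ i)
  have hpos : 0 < 1 - p i / ρ := by
    have : p i / ρ < 1 := (div_lt_one (hρpos i)).mpr (hgen i)
    linarith
  have := mul_eq_zero.mp heach
  rcases this with h | h
  · exact absurd h hpos.ne'
  · exact h
end

section
/- For two-state discrimination (N = 2) of distinct states s_1, s_2 with priors p_1, p_2 > 0: if ((p̃_i, s_i; 1−p̃_i, t_i))_{i=1,2} is a weak Helstrom family and the conjugate states t_1, t_2 are distinguishable (there is a continuous affine functional ẽ: S̃ → [0,1] with ẽ(t_1) = 1 and ẽ(t_2) = 0), then the family is a Helstrom family and (1−e, e) is an optimal observable, where e is the restriction of ẽ to S. -/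
theorem affine_extend_aux {X : Type*} [AddCommGroup X] [Module ℝ X]
    [TopologicalSpace X] [IsTopologicalAddGroup X] [ContinuousSMul ℝ X]
    {S : Set X} (hS : Convex ℝ S)
    (V : Submodule ℝ X) (hSV : S ⊆ (V : Set X)) (hVdense : Dense (V : Set X))
    (hVcont : ∀ f : V →ₗ[ℝ] ℝ,
      Bornology.IsBounded (f '' (((↑) : V → X) ⁻¹' S)) → Continuous f)
    {s0 : X} (hs0 : s0 ∈ S)
    (f : X → ℝ) (hf : IsAffineOn S f) (hf01 : ∀ x ∈ S, f x ∈ Set.Icc (0:ℝ) 1) :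
    ∃ F : X → ℝ, Continuous F ∧ ∀ x ∈ S, F x = f x := by
  classical
  set P : X → ℝ → Prop := fun x r => ∃ a b : ℝ, ∃ u v : X, 0 ≤ a ∧ 0 ≤ b ∧ u ∈ S ∧ v ∈ S ∧
      x = a • (u - s0) - b • (v - s0) ∧ r = a * (f u - f s0) - b * (f v - f s0) with hPdef
  have merge : ∀ a b u v, 0 ≤ a → 0 ≤ b → u ∈ S → v ∈ S →
      ∃ c w, 0 ≤ c ∧ w ∈ S ∧ a • (u - s0) + b • (v - s0) = c • (w - s0) ∧
        a * (f u - f s0) + b * (f v - f s0) = c * (f w - f s0) := by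
    intro a b u v ha hb hu hv
    rcases eq_or_lt_of_le (add_nonneg ha hb) with hab | hab
    · have ha0 : a = 0 := by linarith
      have hb0 : b = 0 := by linarith
      exact ⟨0, s0, le_rfl, hs0, by simp [ha0, hb0], by simp [ha0, hb0]⟩
    · have hc : (0:ℝ) < a + b := hab
      have hl0 : 0 ≤ a / (a + b) := div_nonneg ha hc.le
      have hl1 : a / (a + b) ≤ 1 := by rw [div_le_one hc]; linarith
      refine ⟨a + b, (a / (a+b)) • u + (1 - a/(a+b)) • v, hc.le,
        hS hu hv hl0 (by linarith) (by ring), ?_, ?_⟩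
      · have key : (a+b) • ((a / (a+b)) • u + (1 - a/(a+b)) • v - s0)
            = a • (u - s0) + b • (v - s0) := by
          match_scalars <;> field_simp <;> ring
        rw [key]
      · have hfw : f ((a / (a+b)) • u + (1 - a/(a+b)) • v)
            = (a/(a+b)) * f u + (1 - a/(a+b)) * f v := hf u hu v hv _ hl0 hl1
        rw [hfw]
        field_simp
        ring
  have scale : ∀ a b u v, 0 ≤ a → 0 ≤ b → u ∈ S → v ∈ S →
      a • (u - s0) = b • (v - s0) → a * (f u - f s0) = b * (f v - f s0) := by
    have aux : ∀ a b u v, 0 ≤ a → 0 ≤ b → a ≤ b → u ∈ S → v ∈ S →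
        a • (u - s0) = b • (v - s0) → a * (f u - f s0) = b * (f v - f s0) := by
      intro a b u v ha hb hab hu hv heq
      rcases eq_or_lt_of_le hb with hb0 | hb0
      · have ha0 : a = 0 := le_antisymm (hab.trans hb0.symm.le) ha
        have hb0' : b = 0 := hb0.symm
        simp [ha0, hb0']
      · have hbne : b ≠ 0 := hb0.ne'
        have hl0 : 0 ≤ a / b := div_nonneg ha hb
        have hl1 : a / b ≤ 1 := by rw [div_le_one hb0]; exact hab
        have h3 : v - s0 = (a / b) • (u - s0) := by
          have := congrArg (fun z => b⁻¹ • z) heq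
          simpa [smul_smul, inv_mul_cancel₀ hbne, div_eq_inv_mul] using this.symm
        have hv' : v = (a/b) • u + (1 - a/b) • s0 := by
          have : v = (a/b) • (u - s0) + s0 := by rw [← h3]; abel
          rw [this, smul_sub, sub_smul, one_smul]; abel
        have hfv : f v = (a/b) * f u + (1 - a/b) * f s0 := by
          rw [hv']; exact hf u hu s0 hs0 _ hl0 hl1
        rw [hfv]; field_simp; ring
    intro a b u v ha hb hu hv heq
    rcases le_total a b with h | h
    · exact aux a b u v ha hb h hu hv heq
    · exact (aux b a v u hb ha h hv hu heq.symm).symm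
  have huniq : ∀ x r r', P x r → P x r' → r = r' := by
    rintro x r r' ⟨a,b,u,v,ha,hb,hu,hv,hx,hr⟩ ⟨a',b',u',v',ha',hb',hu',hv',hx',hr'⟩
    have hsum : a • (u - s0) + b' • (v' - s0) = a' • (u' - s0) + b • (v - s0) := by
      have h0 : a • (u - s0) - b • (v - s0) = a' • (u' - s0) - b' • (v' - s0) :=
        hx.symm.trans hx'
      rw [sub_eq_sub_iff_add_eq_add] at h0
      exact h0
    obtain ⟨c, w, hc, hw, hcw, hcv⟩ := merge a b' u v' ha hb' hu hv'
    obtain ⟨c', w', hc', hw', hcw', hcv'⟩ := merge a' b u' v ha' hb hu' hv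
    have : c * (f w - f s0) = c' * (f w' - f s0) :=
      scale c c' w w' hc hc' hw hw' (by rw [← hcw, ← hcw', hsum])
    rw [hr, hr']
    linarith [hcv, hcv', this]
  have hPzero : P 0 0 := ⟨0, 0, s0, s0, le_rfl, le_rfl, hs0, hs0, by simp, by simp⟩
  have hPadd : ∀ x y r s, P x r → P y s → P (x + y) (r + s) := by
    rintro x y r s ⟨a,b,u,v,ha,hb,hu,hv,hx,hr⟩ ⟨a',b',u',v',ha',hb',hu',hv',hy,hs'⟩
    obtain ⟨c, w, hc, hw, hcw, hcv⟩ := merge a a' u u' ha ha' hu hu'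
    obtain ⟨d, z, hd, hz, hdz, hdv⟩ := merge b b' v v' hb hb' hv hv'
    exact ⟨c, d, w, z, hc, hd, hw, hz,
      by rw [hx, hy, ← hcw, ← hdz]; abel,
      by rw [hr, hs', ← hcv, ← hdv]; ring⟩
  have hPsmul : ∀ (c : ℝ) x r, P x r → P (c • x) (c * r) := by
    rintro c x r ⟨a,b,u,v,ha,hb,hu,hv,hx,hr⟩
    rcases le_total 0 c with hc | hc
    · exact ⟨c*a, c*b, u, v, mul_nonneg hc ha, mul_nonneg hc hb, hu, hv,
        by rw [hx, smul_sub, smul_smul, smul_smul],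
        by rw [hr]; ring⟩
    · refine ⟨-c*b, -c*a, v, u, mul_nonneg (neg_nonneg.2 hc) hb,
        mul_nonneg (neg_nonneg.2 hc) ha, hv, hu, ?_, by rw [hr]; ring⟩
      rw [hx, smul_sub, smul_smul, smul_smul]
      simp only [neg_mul, neg_smul]
      abel
  have hs0V : s0 ∈ V := hSV hs0
  let D' : Submodule ℝ V :=
    { carrier := {x : V | ∃ r, P (x : X) r}
      add_mem' := by rintro x y ⟨r, hr⟩ ⟨s, hs'⟩; exact ⟨r + s, hPadd _ _ _ _ hr hs'⟩
      zero_mem' := ⟨0, hPzero⟩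
      smul_mem' := by rintro c x ⟨r, hr⟩; exact ⟨c * r, hPsmul c _ _ hr⟩ }
  let val : X → ℝ := fun x => if h : ∃ r, P x r then h.choose else 0
  have val_eq : ∀ x r, P x r → val x = r := by
    intro x r hr
    have h : ∃ r, P x r := ⟨r, hr⟩
    simp only [val, dif_pos h]
    exact huniq x _ _ h.choose_spec hr
  let ℓD : D' →ₗ[ℝ] ℝ :=
    { toFun := fun x => val (x : X)
      map_add' := by
        rintro ⟨x, rx, hrx⟩ ⟨y, ry, hry⟩
        simp only [Submodule.coe_add]
        rw [val_eq _ _ hrx, val_eq _ _ hry, val_eq _ _ (hPadd _ _ _ _ hrx hry)]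
      map_smul' := by
        rintro c ⟨x, rx, hrx⟩
        show val ((c • x : V) : X) = c * val (x : X)
        rw [Submodule.coe_smul]
        rw [val_eq _ _ hrx, val_eq _ _ (hPsmul c _ _ hrx)] }
  obtain ⟨ℓ, hℓ⟩ := ℓD.exists_extend
  have hℓD : ∀ z : V, (hz : z ∈ D') → ℓ z = val (z : X) := by
    intro z hz
    have := LinearMap.ext_iff.1 hℓ ⟨z, hz⟩
    exact this
  have hPdiff : ∀ x, x ∈ S → P (x - s0) (f x - f s0) :=
    fun x hx => ⟨1, 0, x, s0, zero_le_one, le_rfl, hx, hs0, by simp, by simp⟩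
  have hℓS : ∀ x (hx : x ∈ S), ℓ ⟨x, hSV hx⟩ = f x - f s0 + ℓ ⟨s0, hs0V⟩ := by
    intro x hx
    have hmem : (⟨x, hSV hx⟩ - ⟨s0, hs0V⟩ : V) ∈ D' := ⟨f x - f s0, hPdiff x hx⟩
    have h1 : ℓ (⟨x, hSV hx⟩ - ⟨s0, hs0V⟩) = f x - f s0 := by
      rw [hℓD _ hmem]
      exact val_eq _ _ (hPdiff x hx)
    rw [map_sub] at h1
    linarith
  have hbd : Bornology.IsBounded (ℓ '' (((↑) : V → X) ⁻¹' S)) := by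
    apply (Metric.isBounded_Icc (ℓ ⟨s0, hs0V⟩ - f s0) (1 - f s0 + ℓ ⟨s0, hs0V⟩)).subset
    rintro y ⟨v, hv, rfl⟩
    have hv' : (v : X) ∈ S := hv
    have h1 : ℓ v = f ↑v - f s0 + ℓ ⟨s0, hs0V⟩ := hℓS ↑v hv'
    have h01 := hf01 ↑v hv'
    constructor <;> [skip; skip] <;> rw [h1] <;> [linarith [h01.1]; linarith [h01.2]]
  have hcont : Continuous ℓ := hVcont ℓ hbd
  letI : UniformSpace X := IsTopologicalAddGroup.rightUniformSpace X
  haveI : IsUniformAddGroup X := isUniformAddGroup_of_addCommGroup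
  have hue : IsUniformInducing ((↑) : V → X) := isUniformEmbedding_subtype_val.isUniformInducing
  haveI : IsUniformAddGroup V := IsUniformInducing.isUniformAddGroup V.subtype hue
  have hdr : DenseRange ((↑) : V → X) := hVdense.denseRange_val
  have huc : UniformContinuous ⇑ℓ := uniformContinuous_addMonoidHom_of_continuous hcont
  refine ⟨fun x => (hue.isDenseInducing hdr).extend ℓ x
      - (hue.isDenseInducing hdr).extend ℓ s0 + f s0, ?_, ?_⟩
  · exact ((uniformContinuous_uniformly_extend hue hdr huc).continuous.sub
      continuous_const).add continuous_const
  · intro x hx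
    have h1 : (hue.isDenseInducing hdr).extend ℓ x = ℓ ⟨x, hSV hx⟩ :=
      uniformly_extend_of_ind hue hdr huc ⟨x, hSV hx⟩
    have h2 : (hue.isDenseInducing hdr).extend ℓ s0 = ℓ ⟨s0, hs0V⟩ :=
      uniformly_extend_of_ind hue hdr huc ⟨s0, hs0V⟩
    simp only
    rw [h1, h2, hℓS x hx]
    ring


/-- Two-state discrimination: if the conjugate states `t1, t2` of a weak Helstrom family
are distinguishable by a virtual effect `g` (continuous affine, `[0,1]`-valued on `S̃`,
`g t1 = 1`, `g t2 = 0`), then the family is a Helstrom family and the two-valued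
observable `(1 − e, e)` with `e = g|_S` is optimal. -/
theorem two_state_distinguishable_helstrom {X : Type*} [AddCommGroup X] [Module ℝ X]
    [TopologicalSpace X] [IsTopologicalAddGroup X] [ContinuousSMul ℝ X]
    [LocallyConvexSpace ℝ X] [T2Space X]
    (S Stilde : Set X) (hS : Convex ℝ S) (hSt : Convex ℝ Stilde)
    (hcomp : IsCompact Stilde) (hcl : closure S = Stilde)
    (V : Submodule ℝ X) (hSV : S ⊆ (V : Set X)) (hVdense : Dense (V : Set X))
    (hVcont : ∀ f : V →ₗ[ℝ] ℝ,
      Bornology.IsBounded (f '' (((↑) : V → X) ⁻¹' S)) → Continuous f)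
    (s1 s2 : X) (hs1 : s1 ∈ S) (hs2 : s2 ∈ S) (hne : s1 ≠ s2)
    (p1 p2 : ℝ) (hp1 : 0 < p1) (hp2 : 0 < p2) (hpsum : p1 + p2 = 1)
    (ρ : ℝ) (hρ1 : p1 ≤ ρ) (hρ2 : p2 ≤ ρ)
    (t1 t2 sref : X) (ht1 : t1 ∈ Stilde) (ht2 : t2 ∈ Stilde) (hsref : sref ∈ Stilde)
    (hfam1 : (p1 / ρ) • s1 + (1 - p1 / ρ) • t1 = sref)
    (hfam2 : (p2 / ρ) • s2 + (1 - p2 / ρ) • t2 = sref)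
    (g : X → ℝ) (hg : IsVirtualEffect Stilde g) (hg1 : g t1 = 1) (hg2 : g t2 = 0) :
    p1 * (1 - g s1) + p2 * g s2 = ρ ∧
      ∀ e1 e2 : X → ℝ, IsAffineOn S e1 → (∀ x ∈ S, e1 x ∈ Set.Icc (0 : ℝ) 1) →
        IsAffineOn S e2 → (∀ x ∈ S, e2 x ∈ Set.Icc (0 : ℝ) 1) →
        (∀ x ∈ S, e1 x + e2 x = 1) →
        p1 * e1 s1 + p2 * e2 s2 ≤ ρ := by
  have hρ : (0:ℝ) < ρ := lt_of_lt_of_le hp1 hρ1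
  have hSsub : S ⊆ Stilde := hcl ▸ subset_closure
  obtain ⟨hgc, hga, hg01⟩ := hg
  have hl10 : 0 ≤ p1 / ρ := by positivity
  have hl11 : p1 / ρ ≤ 1 := by rw [div_le_one hρ]; exact hρ1
  have hl20 : 0 ≤ p2 / ρ := by positivity
  have hl21 : p2 / ρ ≤ 1 := by rw [div_le_one hρ]; exact hρ2
  have hρl1 : ρ * (p1 / ρ) = p1 := by field_simp
  have hρl2 : ρ * (p2 / ρ) = p2 := by field_simp
  set l1 := p1 / ρ with hl1def
  set l2 := p2 / ρ with hl2def
  constructor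
  · have hgs1 : g sref = (p1 / ρ) * g s1 + (1 - p1 / ρ) * g t1 := by
      rw [← hfam1]; exact hga s1 (hSsub hs1) t1 ht1 _ hl10 hl11
    have hgs2 : g sref = (p2 / ρ) * g s2 + (1 - p2 / ρ) * g t2 := by
      rw [← hfam2]; exact hga s2 (hSsub hs2) t2 ht2 _ hl20 hl21
    rw [hg1] at hgs1
    rw [hg2] at hgs2
    linear_combination (g s1 - 1) * hρl1 + (- g s2) * hρl2 + ρ * hgs1 - ρ * hgs2
  · intro e1 e2 ha1 h01_1 ha2 h01_2 hsum1
    obtain ⟨F1, hF1c, hF1e⟩ := affine_extend_aux hS V hSV hVdense hVcont hs1 e1 ha1 h01_1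
    obtain ⟨F2, hF2c, hF2e⟩ := affine_extend_aux hS V hSV hVdense hVcont hs1 e2 ha2 h01_2
    have hIcc : ∀ (F fo : X → ℝ), Continuous F → (∀ x ∈ S, F x = fo x) →
        (∀ x ∈ S, fo x ∈ Set.Icc (0:ℝ) 1) → ∀ x ∈ Stilde, F x ∈ Set.Icc (0:ℝ) 1 := by
      intro F fo hFc hFe h01 x hx
      have hsub : Stilde ⊆ F ⁻¹' Set.Icc (0:ℝ) 1 := by
        rw [← hcl]
        exact closure_minimal
          (fun y hy => by rw [Set.mem_preimage, hFe y hy]; exact h01 y hy)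
          (isClosed_Icc.preimage hFc)
      exact hsub hx
    have haff : ∀ (F fo : X → ℝ), Continuous F → (∀ x ∈ S, F x = fo x) → IsAffineOn S fo →
        IsAffineOn Stilde F := by
      intro F fo hFc hFe hfo x hx y hy l hl0 hl1
      have hc1 : Continuous fun p : X × X => F (l • p.1 + (1 - l) • p.2) :=
        hFc.comp ((continuous_fst.const_smul l).add (continuous_snd.const_smul (1 - l)))
      have hc2 : Continuous fun p : X × X => l * F p.1 + (1 - l) * F p.2 :=
        (continuous_const.mul (hFc.comp continuous_fst)).add
          (continuous_const.mul (hFc.comp continuous_snd))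
      have heq : Set.EqOn (fun p : X × X => F (l • p.1 + (1 - l) • p.2))
          (fun p : X × X => l * F p.1 + (1 - l) * F p.2) (S ×ˢ S) := by
        rintro ⟨qx, qy⟩ ⟨hqx, hqy⟩
        have hmem : l • qx + (1 - l) • qy ∈ S := hS hqx hqy hl0 (by linarith) (by ring)
        simp only
        rw [hFe _ hmem, hFe _ hqx, hFe _ hqy]
        exact hfo qx hqx qy hqy l hl0 hl1
      have hSS : (x, y) ∈ closure (S ×ˢ S) := by
        rw [closure_prod_eq, hcl]
        exact ⟨hx, hy⟩
      exact heq.closure hc1 hc2 hSS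
    have hsumSt : ∀ x ∈ Stilde, F1 x + F2 x = 1 := by
      intro x hx
      have hsub : Stilde ⊆ {x | F1 x + F2 x = 1} := by
        rw [← hcl]
        refine closure_minimal (fun y hy => ?_) (isClosed_eq (hF1c.add hF2c) continuous_const)
        simp only [Set.mem_setOf_eq, hF1e y hy, hF2e y hy]
        exact hsum1 y hy
      exact hsub hx
    have hA1 := haff F1 e1 hF1c hF1e ha1
    have hA2 := haff F2 e2 hF2c hF2e ha2
    have hq1 : F1 sref = (p1 / ρ) * F1 s1 + (1 - p1 / ρ) * F1 t1 := by
      rw [← hfam1]; exact hA1 s1 (hSsub hs1) t1 ht1 _ hl10 hl11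
    have hq2 : F2 sref = (p2 / ρ) * F2 s2 + (1 - p2 / ρ) * F2 t2 := by
      rw [← hfam2]; exact hA2 s2 (hSsub hs2) t2 ht2 _ hl20 hl21
    have h0t1 : 0 ≤ F1 t1 := (hIcc F1 e1 hF1c hF1e h01_1 t1 ht1).1
    have h0t2 : 0 ≤ F2 t2 := (hIcc F2 e2 hF2c hF2e h01_2 t2 ht2).1
    have hsum' : F1 sref + F2 sref = 1 := hsumSt sref hsref
    have i1 : (p1 / ρ) * F1 s1 ≤ F1 sref := by nlinarith [mul_nonneg (sub_nonneg.2 hl11) h0t1]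
    have i2 : (p2 / ρ) * F2 s2 ≤ F2 sref := by nlinarith [mul_nonneg (sub_nonneg.2 hl21) h0t2]
    have hE1 : e1 s1 = F1 s1 := (hF1e s1 hs1).symm
    have hE2 : e2 s2 = F2 s2 := (hF2e s2 hs2).symm
    rw [hE1, hE2]
    have key : p1 * F1 s1 + p2 * F2 s2 ≤ ρ * (F1 sref + F2 sref) := by
      have b1 : p1 * F1 s1 = ρ * (l1 * F1 s1) := by linear_combination (-F1 s1) * hρl1
      have b2 : p2 * F2 s2 = ρ * (l2 * F2 s2) := by linear_combination (-F2 s2) * hρl2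
      rw [b1, b2, mul_add]
      exact add_le_add (mul_le_mul_of_nonneg_left i1 hρ.le) (mul_le_mul_of_nonneg_left i2 hρ.le)
    rw [hsum', mul_one] at key
    exact key
end

section
/- For two distinct states s'_1, s'_2 in a state space S of a general probabilistic theory, the Gudder distance d(s'_1, s'_2), defined as the infimum of λ ∈ (0, 1/2] such that λt_1 + (1−λ)s'_1 = λt_2 + (1−λ)s'_2 for some t_1, t_2 ∈ S̃, satisfies d(s'_1, s'_2) = 1 − 1/(2 P_succ(s'_1, s'_2)), where P_succ(s'_1, s'_2) is the optimal success probability for discriminating s'_1, s'_2 with equal priors 1/2. -/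
section WellDef
variable {X : Type*} [AddCommGroup X] [Module ℝ X]

lemma degenerate_diff {e : X → ℝ}
    {r' : ℝ} {x y x' y' : X}
    (h : (0:ℝ) • (x - y) = r' • (x' - y')) (hr' : 0 ≤ r') :
    (0:ℝ) * (e x - e y) = r' * (e x' - e y') := by
  rw [zero_smul] at h
  rcases hr'.eq_or_lt with hr'0 | hr'0
  · rw [← hr'0]; ring
  · have hxy : x' = y' := by
      have h0 : x' - y' = 0 := by
        rcases smul_eq_zero.1 h.symm with h1 | h1
        · exact absurd h1 (ne_of_gt hr'0)
        · exact h1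
      rwa [sub_eq_zero] at h0
    rw [hxy]; ring

lemma affine_diff_eq {S : Set X} {e : X → ℝ} (he : IsAffineOn S e)
    {r r' : ℝ} {x y x' y' : X} (hr : 0 ≤ r) (hr' : 0 ≤ r')
    (hx : x ∈ S) (hy : y ∈ S) (hx' : x' ∈ S) (hy' : y' ∈ S)
    (h : r • (x - y) = r' • (x' - y')) :
    r * (e x - e y) = r' * (e x' - e y') := by
  rcases hr.eq_or_lt with hr0 | hr0
  · rw [← hr0] at h ⊢; exact degenerate_diff h hr'
  rcases hr'.eq_or_lt with hr'0 | hr'0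
  · rw [← hr'0] at h ⊢
    have := degenerate_diff (e := e) h.symm hr
    linarith
  -- both positive
  set T : ℝ := r + r' with hT
  have hT0 : (0:ℝ) < T := by positivity
  set l : ℝ := r / T with hl
  have hl0 : 0 ≤ l := by positivity
  have hl1 : l ≤ 1 := by
    rw [hl, div_le_one hT0]; linarith
  have hTl : T * l = r := by rw [hl]; field_simp
  have hTl' : T * (1 - l) = r' := by rw [hl]; field_simp; ring
  have key : r • x + r' • y' = r' • x' + r • y := by
    linear_combination (norm := module) h
  have hpt : l • x + (1 - l) • y' = (1 - l) • x' + l • y := by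
    apply smul_right_injective X (ne_of_gt hT0)
    simp only [smul_add, smul_smul, hTl, hTl']
    linear_combination (norm := module) key
  have h1 := he x hx y' hy' l hl0 hl1
  have h2 := he x' hx' y hy (1 - l) (by linarith) (by linarith)
  rw [show (1 : ℝ) - (1 - l) = l by ring] at h2
  rw [hpt, h2] at h1
  -- h1 : (1-l) * e x' + l * e y = l * e x + (1-l) * e y'
  have hlr : l = r / T := hl
  have h1l : 1 - l = r' / T := by rw [hl]; field_simp; ring
  rw [hlr, h1l] at h1
  field_simp at h1
  linarith

/-- choice-based linearization of `e` on the cone of differences -/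
noncomputable def philift (S : Set X) (e : X → ℝ) (w : X) : ℝ :=
  letI := Classical.dec (∃ p : ℝ × X × X, 0 ≤ p.1 ∧ p.2.1 ∈ S ∧ p.2.2 ∈ S ∧ w = p.1 • (p.2.1 - p.2.2))
  if h : ∃ p : ℝ × X × X, 0 ≤ p.1 ∧ p.2.1 ∈ S ∧ p.2.2 ∈ S ∧ w = p.1 • (p.2.1 - p.2.2)
  then h.choose.1 * (e h.choose.2.1 - e h.choose.2.2) else 0

lemma philift_eq {S : Set X} {e : X → ℝ} (he : IsAffineOn S e)
    {r : ℝ} {x y : X} (hr : 0 ≤ r) (hx : x ∈ S) (hy : y ∈ S) :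
    philift S e (r • (x - y)) = r * (e x - e y) := by
  have hex : ∃ p : ℝ × X × X, 0 ≤ p.1 ∧ p.2.1 ∈ S ∧ p.2.2 ∈ S ∧
      r • (x - y) = p.1 • (p.2.1 - p.2.2) := ⟨(r, x, y), hr, hx, hy, rfl⟩
  rw [philift, dif_pos hex]
  obtain ⟨h1, h2, h3, h4⟩ := hex.choose_spec
  exact affine_diff_eq he h1 hr h2 h3 hx hy h4.symm

/-- The cone of differences of `S`, as a submodule of `V`. -/
def coneSub (S : Set X) (V : Submodule ℝ X) (hS : Convex ℝ S)
    {s0 : X} (hs0 : s0 ∈ S) : Submodule ℝ V where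
  carrier := {v | ∃ (r : ℝ) (x y : X), 0 ≤ r ∧ x ∈ S ∧ y ∈ S ∧ (v : X) = r • (x - y)}
  zero_mem' := ⟨0, s0, s0, le_refl 0, hs0, hs0, by simp⟩
  add_mem' := by
    rintro a b ⟨r1, x1, y1, hr1, hx1, hy1, h1⟩ ⟨r2, x2, y2, hr2, hx2, hy2, h2⟩
    rcases hr1.eq_or_lt with hr10 | hr10
    · refine ⟨r2, x2, y2, hr2, hx2, hy2, ?_⟩
      push_cast
      rw [h1, h2, ← hr10, zero_smul, zero_add]
    rcases hr2.eq_or_lt with hr20 | hr20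
    · refine ⟨r1, x1, y1, hr1, hx1, hy1, ?_⟩
      push_cast
      rw [h1, h2, ← hr20, zero_smul, add_zero]
    set T : ℝ := r1 + r2 with hT
    have hT0 : (0:ℝ) < T := by positivity
    set l : ℝ := r1 / T with hl
    have hl0 : 0 ≤ l := by positivity
    have hl1 : l ≤ 1 := by rw [hl, div_le_one hT0]; linarith
    have h1l : 0 ≤ 1 - l := by linarith
    refine ⟨T, l • x1 + (1 - l) • x2, l • y1 + (1 - l) • y2, hT0.le,
      hS hx1 hx2 hl0 h1l (by ring), hS hy1 hy2 hl0 h1l (by ring), ?_⟩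
    push_cast
    rw [h1, h2]
    have hTl : T * l = r1 := by rw [hl]; field_simp
    have hTl' : T * (1 - l) = r2 := by rw [hl]; field_simp; ring
    simp only [smul_sub, smul_add, smul_smul, hTl, hTl']
    module
  smul_mem' := by
    rintro c a ⟨r, x, y, hr, hx, hy, h⟩
    rcases le_or_gt 0 c with hc | hc
    · refine ⟨c * r, x, y, mul_nonneg hc hr, hx, hy, ?_⟩
      push_cast
      rw [h, smul_smul]
    · refine ⟨(-c) * r, y, x, mul_nonneg (by linarith) hr, hy, hx, ?_⟩
      push_cast
      rw [h, smul_smul]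
      module

end WellDef

section Extension

variable {X : Type*} [AddCommGroup X] [Module ℝ X]
    [TopologicalSpace X] [IsTopologicalAddGroup X] [ContinuousSMul ℝ X] [T2Space X]

set_option maxHeartbeats 1000000 in
/-- Every `[0,1]`-valued affine functional on `S` is the restriction of
`(continuous linear) + constant` on `X`. -/
lemma exists_extension (S : Set X) (hS : Convex ℝ S)
    (V : Submodule ℝ X) (hSV : S ⊆ (V : Set X)) (hVdense : Dense (V : Set X))
    (hVcont : ∀ f : V →ₗ[ℝ] ℝ,
      Bornology.IsBounded (f '' (((↑) : V → X) ⁻¹' S)) → Continuous f)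
    {s0 : X} (hs0 : s0 ∈ S) (e : X → ℝ) (he : IsAffineOn S e)
    (he01 : ∀ x ∈ S, e x ∈ Set.Icc (0 : ℝ) 1) :
    ∃ (f : X → ℝ) (c : ℝ), Continuous f ∧ (∀ a b : X, f (a + b) = f a + f b) ∧
      (∀ (t : ℝ) (a : X), f (t • a) = t * f a) ∧ ∀ x ∈ S, e x = f x + c := by
  classical
  set U : Submodule ℝ V := coneSub S V hS hs0 with hU
  -- the linear functional on U
  have memU : ∀ v : V, v ∈ U ↔ ∃ (r : ℝ) (x y : X),
      0 ≤ r ∧ x ∈ S ∧ y ∈ S ∧ (v : X) = r • (x - y) := fun v => Iff.rfl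
  have hadd0 : ∀ u v : V, u ∈ U → v ∈ U →
      philift S e ((u : X) + (v : X)) = philift S e u + philift S e v := by
    rintro u v ⟨r1, x1, y1, hr1, hx1, hy1, h1⟩ ⟨r2, x2, y2, hr2, hx2, hy2, h2⟩
    have h0 : philift S e (0 : X) = 0 := by
      have h := philift_eq (S := S) he (le_refl 0) hx1 hy1
      rw [zero_smul] at h
      rw [h]; ring
    rcases hr1.eq_or_lt with hr10 | hr10
    · have hu0 : (u : X) = 0 := by rw [h1, ← hr10, zero_smul]
      rw [hu0, zero_add, h0, zero_add]
    rcases hr2.eq_or_lt with hr20 | hr20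
    · have hv0 : (v : X) = 0 := by rw [h2, ← hr20, zero_smul]
      rw [hv0, add_zero, h0, add_zero]
    set T : ℝ := r1 + r2 with hT
    have hT0 : (0:ℝ) < T := by positivity
    set l : ℝ := r1 / T with hl
    have hl0 : 0 ≤ l := by positivity
    have hl1 : l ≤ 1 := by rw [hl, div_le_one hT0]; linarith
    have h1l : 0 ≤ 1 - l := by linarith
    have hTl : T * l = r1 := by rw [hl]; field_simp
    have hTl' : T * (1 - l) = r2 := by rw [hl]; field_simp; ring
    set x' : X := l • x1 + (1 - l) • x2 with hx'
    set y' : X := l • y1 + (1 - l) • y2 with hy'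
    have hx'S : x' ∈ S := hS hx1 hx2 hl0 h1l (by ring)
    have hy'S : y' ∈ S := hS hy1 hy2 hl0 h1l (by ring)
    have hsum : (u : X) + (v : X) = T • (x' - y') := by
      rw [h1, h2, hx', hy']
      simp only [smul_sub, smul_add, smul_smul, hTl, hTl']
      module
    rw [hsum, h1, h2, philift_eq he hT0.le hx'S hy'S,
      philift_eq he hr1 hx1 hy1, philift_eq he hr2 hx2 hy2]
    have hex' : e x' = l * e x1 + (1 - l) * e x2 := he x1 hx1 x2 hx2 l hl0 hl1
    have hey' : e y' = l * e y1 + (1 - l) * e y2 := he y1 hy1 y2 hy2 l hl0 hl1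
    rw [hex', hey']
    linear_combination (e x1 - e y1) * hTl + (e x2 - e y2) * hTl'
  have hsmul0 : ∀ (c : ℝ) (u : V), u ∈ U →
      philift S e ((c • u : V) : X) = c * philift S e u := by
    rintro c u ⟨r, x, y, hr, hx, hy, h⟩
    rcases le_or_gt 0 c with hc | hc
    · have : ((c • u : V) : X) = (c * r) • (x - y) := by push_cast; rw [h, smul_smul]
      rw [this, h, philift_eq he (mul_nonneg hc hr) hx hy, philift_eq he hr hx hy]
      ring
    · have : ((c • u : V) : X) = ((-c) * r) • (y - x) := by
        push_cast; rw [h, smul_smul]; module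
      rw [this, h, philift_eq he (mul_nonneg (by linarith) hr) hy hx,
        philift_eq he hr hx hy]
      ring
  set f0 : U →ₗ[ℝ] ℝ :=
    { toFun := fun u => philift S e ((u : V) : X)
      map_add' := fun u v => hadd0 u.1 v.1 u.2 v.2
      map_smul' := fun c u => hsmul0 c u.1 u.2 } with hf0
  obtain ⟨C, hC⟩ := Submodule.exists_isCompl U
  set g : V →ₗ[ℝ] ℝ := f0 ∘ₗ (U.linearProjOfIsCompl C hC) with hg
  have hgU : ∀ (u : V) (hu : u ∈ U), g u = philift S e (u : X) := by
    intro u hu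
    rw [hg]
    simp only [LinearMap.coe_comp, Function.comp_apply]
    rw [Submodule.linearProjOfIsCompl, Submodule.projectionOnto_apply_left hC ⟨u, hu⟩]
    rfl
  -- value of g on S
  set c0 : ℝ := e s0 - g ⟨s0, hSV hs0⟩ with hc0
  have hgS : ∀ x (hx : x ∈ S), g ⟨x, hSV hx⟩ = e x - c0 := by
    intro x hx
    have hmem : (⟨x, hSV hx⟩ - ⟨s0, hSV hs0⟩ : V) ∈ U :=
      ⟨1, x, s0, zero_le_one, hx, hs0, by push_cast; rw [one_smul]⟩
    have h1 : g (⟨x, hSV hx⟩ - ⟨s0, hSV hs0⟩ : V) = philift S e (x - s0) := by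
      rw [hgU _ hmem]; rfl
    have h2 : philift S e (x - s0) = e x - e s0 := by
      have := philift_eq he zero_le_one hx hs0
      rw [one_smul] at this
      rw [this]; ring
    rw [map_sub] at h1
    rw [hc0]
    linarith [h1, h2]
  -- g is bounded on S, hence continuous
  have hgb : Bornology.IsBounded (g '' (((↑) : V → X) ⁻¹' S)) := by
    apply (Metric.isBounded_Icc (-c0) (1 - c0)).subset
    rintro q ⟨v, hv, rfl⟩
    have hv' : (v : X) ∈ S := hv
    have : g v = e v - c0 := by
      have := hgS (v : X) hv'
      simpa using this
    rw [this]
    have := he01 _ hv'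
    constructor <;> [linarith [this.1]; linarith [this.2]]
  have hgc : Continuous g := hVcont g hgb
  -- now extend by density
  letI : UniformSpace X := IsTopologicalAddGroup.rightUniformSpace X
  haveI : IsUniformAddGroup X := isUniformAddGroup_of_addCommGroup
  haveI : IsUniformAddGroup V := IsUniformAddGroup.comap (V.subtype)
  have hui : IsUniformInducing ((↑) : V → X) := isUniformEmbedding_subtype_val.isUniformInducing
  have hdr : DenseRange ((↑) : V → X) := hVdense.denseRange_val
  have hgu : UniformContinuous g := uniformContinuous_of_continuousAt_zero g hgc.continuousAt
  set F : X → ℝ := (hui.isDenseInducing hdr).extend g with hF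
  have hFc : Continuous F := (uniformContinuous_uniformly_extend hui hdr hgu).continuous
  have hFeq : ∀ v : V, F (v : X) = g v := fun v =>
    (hui.isDenseInducing hdr).extend_eq hgc v
  have hFadd : ∀ a b : X, F (a + b) = F a + F b := by
    have hcl : IsClosed {p : X × X | F (p.1 + p.2) = F p.1 + F p.2} :=
      isClosed_eq (hFc.comp continuous_add)
        ((hFc.comp continuous_fst).add (hFc.comp continuous_snd))
    have hsub : (V : Set X) ×ˢ (V : Set X) ⊆ {p : X × X | F (p.1 + p.2) = F p.1 + F p.2} := by
      rintro ⟨a, b⟩ ⟨ha, hb⟩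
      have : (a + b : X) = ((⟨a, ha⟩ + ⟨b, hb⟩ : V) : X) := rfl
      simp only [Set.mem_setOf_eq]
      rw [this, hFeq, map_add, ← hFeq ⟨a, ha⟩, ← hFeq ⟨b, hb⟩]
    intro a b
    have hdense : Dense ((V : Set X) ×ˢ (V : Set X)) := hVdense.prod hVdense
    have : closure ((V : Set X) ×ˢ (V : Set X)) ⊆ {p : X × X | F (p.1 + p.2) = F p.1 + F p.2} :=
      hcl.closure_subset_iff.2 hsub
    exact this (hdense.closure_eq ▸ Set.mem_univ (a, b))
  have hFsmul : ∀ (t : ℝ) (a : X), F (t • a) = t * F a := by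
    intro t
    have hcl : IsClosed {a : X | F (t • a) = t * F a} :=
      isClosed_eq (hFc.comp (continuous_const_smul t)) (continuous_const.mul hFc)
    have hsub : (V : Set X) ⊆ {a : X | F (t • a) = t * F a} := by
      intro a ha
      have : (t • a : X) = ((t • (⟨a, ha⟩ : V) : V) : X) := rfl
      simp only [Set.mem_setOf_eq]
      rw [this, hFeq, map_smul, ← hFeq ⟨a, ha⟩]
      simp
    intro a
    have : closure (V : Set X) ⊆ {a : X | F (t • a) = t * F a} :=
      hcl.closure_subset_iff.2 hsub
    exact this (hVdense.closure_eq ▸ Set.mem_univ a)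
  refine ⟨F, c0, hFc, hFadd, hFsmul, ?_⟩
  intro x hx
  have := hFeq ⟨x, hSV hx⟩
  rw [this, hgS x hx]
  ring

end Extension


open Pointwise in
set_option maxHeartbeats 1000000 in
/-- Gudder's distance `d(s1,s2)` (the infimum of `λ ∈ (0,1/2]` such that
`λ t1 + (1−λ) s1 = λ t2 + (1−λ) s2` for some `t1, t2 ∈ S̃`) satisfies
`d(s1,s2) = 1 − 1/(2 P_succ(s1,s2))`, where `P_succ(s1,s2)` is the optimal success
probability for discriminating `s1, s2` with equal priors `1/2`. -/
theorem gudder_distance_eq {X : Type*} [AddCommGroup X] [Module ℝ X]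
    [TopologicalSpace X] [IsTopologicalAddGroup X] [ContinuousSMul ℝ X]
    [LocallyConvexSpace ℝ X] [T2Space X]
    (S Stilde : Set X) (hS : Convex ℝ S) (hSt : Convex ℝ Stilde)
    (hcomp : IsCompact Stilde) (hcl : closure S = Stilde)
    (V : Submodule ℝ X) (hSV : S ⊆ (V : Set X)) (hVdense : Dense (V : Set X))
    (hVcont : ∀ f : V →ₗ[ℝ] ℝ,
      Bornology.IsBounded (f '' (((↑) : V → X) ⁻¹' S)) → Continuous f)
    (s1 s2 : X) (hs1 : s1 ∈ S) (hs2 : s2 ∈ S) (hne : s1 ≠ s2) :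
    sInf {l : ℝ | 0 < l ∧ l ≤ 1 / 2 ∧ ∃ t1 ∈ Stilde, ∃ t2 ∈ Stilde,
        l • t1 + (1 - l) • s1 = l • t2 + (1 - l) • s2}
      = 1 - 1 / (2 * sSup {q : ℝ | ∃ e : X → ℝ, IsAffineOn S e ∧
          (∀ x ∈ S, e x ∈ Set.Icc (0 : ℝ) 1) ∧ q = (1 + e s1 - e s2) / 2}) := by
  set D : Set ℝ := {l : ℝ | 0 < l ∧ l ≤ 1 / 2 ∧ ∃ t1 ∈ Stilde, ∃ t2 ∈ Stilde,
      l • t1 + (1 - l) • s1 = l • t2 + (1 - l) • s2} with hDdef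
  set Q : Set ℝ := {q : ℝ | ∃ e : X → ℝ, IsAffineOn S e ∧
      (∀ x ∈ S, e x ∈ Set.Icc (0 : ℝ) 1) ∧ q = (1 + e s1 - e s2) / 2} with hQdef
  have hS1t : s1 ∈ Stilde := hcl ▸ subset_closure hs1
  have hS2t : s2 ∈ Stilde := hcl ▸ subset_closure hs2
  set K : Set X := Stilde - Stilde with hK
  have hdK : s1 - s2 ∈ K := Set.sub_mem_sub hS1t hS2t
  have h0K : (0 : X) ∈ K := by
    have h := Set.sub_mem_sub hS1t hS1t
    rwa [sub_self] at h
  have hKcomp : IsCompact K := by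
    have himg : (fun p : X × X => p.1 - p.2) '' (Stilde ×ˢ Stilde) = K := by
      rw [Set.image_prod]; rfl
    rw [← himg]
    exact (hcomp.prod hcomp).image (continuous_fst.sub continuous_snd)
  set M : Set ℝ := {μ : ℝ | μ ∈ Set.Icc (0:ℝ) 1 ∧ s1 - s2 ∈ μ • K} with hM
  have hMbdd : BddBelow M := ⟨0, fun x hx => hx.1.1⟩
  have hMcomp : IsCompact M := by
    set T : Set (ℝ × X) :=
      ({p : ℝ × X | p.1 ∈ Set.Icc (0:ℝ) 1} ∩ {p : ℝ × X | p.2 ∈ K}) ∩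
        {p : ℝ × X | p.1 • p.2 = s1 - s2} with hT
    have hTclosed : IsClosed T :=
      (((isClosed_Icc).preimage continuous_fst).inter
        (hKcomp.isClosed.preimage continuous_snd)).inter
        (isClosed_eq (continuous_fst.smul continuous_snd) continuous_const)
    have hTsub : T ⊆ (Set.Icc (0:ℝ) 1) ×ˢ K := fun p hp => ⟨hp.1.1, hp.1.2⟩
    have hTcomp : IsCompact T :=
      ((isCompact_Icc).prod hKcomp).of_isClosed_subset hTclosed hTsub
    have himg : Prod.fst '' T = M := by
      ext μ
      constructor
      · rintro ⟨⟨a, k⟩, ⟨⟨hIcc, hk⟩, hkd⟩, rfl⟩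
        exact ⟨hIcc, Set.mem_smul_set.2 ⟨k, hk, hkd⟩⟩
      · rintro ⟨hIcc, hsm⟩
        obtain ⟨k, hk, hkd⟩ := Set.mem_smul_set.1 hsm
        exact ⟨(μ, k), ⟨⟨hIcc, hk⟩, hkd⟩, rfl⟩
    rw [← himg]
    exact hTcomp.image continuous_fst
  have hM1 : (1:ℝ) ∈ M := ⟨⟨zero_le_one, le_refl 1⟩,
    Set.mem_smul_set.2 ⟨s1 - s2, hdK, one_smul ℝ _⟩⟩
  have hMne : M.Nonempty := ⟨1, hM1⟩
  set mu : ℝ := sInf M with hmu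
  have hmuM : mu ∈ M := hMcomp.sInf_mem hMne
  have hmu1 : mu ≤ 1 := hmuM.1.2
  have hmu0 : 0 < mu := by
    rcases hmuM.1.1.eq_or_lt with h0 | h0
    · exfalso
      have hd0 : s1 - s2 ∈ ((0:ℝ) • K : Set X) := by rw [h0]; exact hmuM.2
      rw [Set.zero_smul_set ⟨0, h0K⟩] at hd0
      have : s1 - s2 = 0 := hd0
      exact hne (by rwa [sub_eq_zero] at this)
    · exact h0
  set lstar : ℝ := mu / (1 + mu) with hls
  have h1mu : (0:ℝ) < 1 + mu := by linarith
  have hl0 : 0 < lstar := div_pos hmu0 h1mu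
  have hlhalf : lstar ≤ 1/2 := by
    rw [hls, div_le_iff₀ h1mu]; linarith
  have h1l : 0 < 1 - lstar := by linarith
  have hmul : (1 - lstar) * mu = lstar := by
    rw [hls]; field_simp; ring
  -- witnesses for mu
  obtain ⟨k0, hk0K, hk0d⟩ := Set.mem_smul_set.1 hmuM.2
  obtain ⟨a, haS, b, hbS, hab⟩ := Set.mem_sub.1 hk0K
  have heqstar : lstar • b + (1 - lstar) • s1 = lstar • a + (1 - lstar) • s2 := by
    have h2 : (1 - lstar) • (s1 - s2) = lstar • (a - b) := by
      rw [← hk0d, smul_smul, hmul, hab]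
    linear_combination (norm := module) h2
  have hlD : lstar ∈ D := ⟨hl0, hlhalf, b, hbS, a, haS, heqstar⟩
  -- lower bound for D
  have hDlb : ∀ l ∈ D, lstar ≤ l := by
    rintro l ⟨hl0', hlhalf', t1, ht1, t2, ht2, heq⟩
    have h1l' : (0:ℝ) < 1 - l := by linarith
    have hkey : (1 - l) • (s1 - s2) = l • (t2 - t1) := by
      linear_combination (norm := module) heq
    have hmem : l / (1 - l) ∈ M := by
      constructor
      · exact ⟨by positivity, by rw [div_le_one h1l']; linarith⟩
      · refine Set.mem_smul_set.2 ⟨t2 - t1, Set.sub_mem_sub ht2 ht1, ?_⟩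
        rw [div_eq_inv_mul, ← smul_smul, ← hkey, smul_smul,
          inv_mul_cancel₀ h1l'.ne', one_smul]
    have hle : mu ≤ l / (1 - l) := csInf_le hMbdd hmem
    have h3 : mu * (1 - l) ≤ l := by rwa [← le_div_iff₀ h1l']
    rw [hls, div_le_iff₀ h1mu]
    nlinarith [h3]
  have hDinf : sInf D = lstar :=
    le_antisymm (csInf_le ⟨0, fun x hx => hx.1.le⟩ hlD) (le_csInf ⟨lstar, hlD⟩ hDlb)
  -- the effect side
  have hQhalf : (1:ℝ)/2 ∈ Q := by
    refine ⟨fun _ => 0, ?_, ?_, by norm_num⟩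
    · intro x _ y _ l _ _; simp
    · intro x _; exact ⟨le_refl 0, zero_le_one⟩
  have hQne : Q.Nonempty := ⟨1/2, hQhalf⟩
  have hQbdd : BddAbove Q := by
    refine ⟨1, ?_⟩
    rintro q ⟨e, _, h01, rfl⟩
    have h1 := (h01 s1 hs1).2
    have h2 := (h01 s2 hs2).1
    linarith
  -- upper bound for Q via extension
  have hQub : ∀ q ∈ Q, q ≤ (1 + mu)/2 := by
    rintro q ⟨e, he, h01, rfl⟩
    obtain ⟨f, c, hfc, hfadd, hfsmul, hfe⟩ :=
      exists_extension S hS V hSV hVdense hVcont hs1 e he h01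
    have hIcc : ∀ x ∈ Stilde, f x + c ∈ Set.Icc (0:ℝ) 1 := by
      have hclosed : IsClosed {x : X | f x + c ∈ Set.Icc (0:ℝ) 1} :=
        isClosed_Icc.preimage (hfc.add continuous_const)
      have hsub : S ⊆ {x : X | f x + c ∈ Set.Icc (0:ℝ) 1} := fun x hx => by
        rw [Set.mem_setOf_eq, ← hfe x hx]; exact h01 x hx
      intro x hx
      have hsub2 : Stilde ⊆ {x : X | f x + c ∈ Set.Icc (0:ℝ) 1} :=
        hcl ▸ hclosed.closure_subset_iff.2 hsub
      exact hsub2 hx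
    have h5 : lstar * f b + (1 - lstar) * f s1 = lstar * f a + (1 - lstar) * f s2 := by
      have h := congrArg f heqstar
      rw [hfadd, hfadd, hfsmul, hfsmul, hfsmul, hfsmul] at h
      exact h
    have hfa := hIcc a haS
    have hfb := hIcc b hbS
    have hes1 : e s1 = f s1 + c := hfe s1 hs1
    have hes2 : e s2 = f s2 + c := hfe s2 hs2
    have hdiff : e s1 - e s2 ≤ mu := by
      have hΔ : e s1 - e s2 = f s1 - f s2 := by rw [hes1, hes2]; ring
      have h6 : (1 - lstar) * (f s1 - f s2) = lstar * (f a - f b) := by linarith [h5]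
      have h7 : f a - f b ≤ 1 := by linarith [hfa.2, hfb.1]
      have h8 : lstar * (f a - f b) ≤ lstar := by nlinarith [hl0.le, h7]
      have h9 : (1 - lstar) * (e s1 - e s2) ≤ (1 - lstar) * mu := by
        rw [hΔ, h6, hmul]; exact h8
      exact le_of_mul_le_mul_left h9 h1l
    linarith [hdiff]
  have hPub : sSup Q ≤ (1 + mu)/2 := csSup_le hQne hQub
  -- separation: lower bound for sSup Q
  have hsep : ∀ ν : ℝ, 0 < ν → ν < mu → ∃ q ∈ Q, (1 + ν)/2 < q := by
    intro ν hν0 hνmu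
    have hνK : s1 - s2 ∉ ν • K := by
      intro hmem
      have hνM : ν ∈ M := ⟨⟨hν0.le, by linarith⟩, hmem⟩
      have := csInf_le hMbdd hνM
      linarith
    have hclosed : IsClosed (ν • K) := (hKcomp.smul ν).isClosed
    have hconvex : Convex ℝ (ν • K) := (hSt.sub hSt).smul ν
    obtain ⟨f, u, hfd, hfK⟩ := geometric_hahn_banach_point_closed hconvex hclosed hνK
    set F : X →L[ℝ] ℝ := -f with hF
    have hFd : -u < F (s1 - s2) := by
      simp only [hF, ContinuousLinearMap.neg_apply]
      linarith [hfd]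
    have hFK : ∀ y ∈ ν • K, F y < -u := by
      intro y hy
      simp only [hF, ContinuousLinearMap.neg_apply]
      linarith [hfK y hy]
    obtain ⟨k0', hk0K', hk0max⟩ := hKcomp.exists_isMaxOn ⟨0, h0K⟩ F.continuous.continuousOn
    set m : ℝ := F k0' with hm
    have hmax : ∀ k ∈ K, F k ≤ m := fun k hk => hk0max hk
    have hmd : F (s1 - s2) ≤ m := hmax _ hdK
    have hu0 : (0:ℝ) < -u := by
      have h := hFK _ (Set.smul_mem_smul_set h0K)
      simpa using h
    have hνm : ν * m < -u := by
      have h := hFK _ (Set.smul_mem_smul_set hk0K')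
      rwa [map_smul, smul_eq_mul] at h
    have hm0 : (0:ℝ) < m := by linarith [hFd, hmd, hu0]
    obtain ⟨t0, ht0, hmin⟩ := hcomp.exists_isMinOn ⟨s1, hS1t⟩ F.continuous.continuousOn
    have hminle : ∀ t ∈ Stilde, F t0 ≤ F t := fun t ht => hmin ht
    set E : X → ℝ := fun x => (F x - F t0) / m with hE
    have hEaff : IsAffineOn S E := by
      intro x _ y _ l _ _
      simp only [hE, map_add, map_smul, smul_eq_mul]
      field_simp
      ring
    have hE01 : ∀ x ∈ S, E x ∈ Set.Icc (0:ℝ) 1 := by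
      intro x hx
      have hxt : x ∈ Stilde := hcl ▸ subset_closure hx
      constructor
      · exact div_nonneg (by linarith [hminle x hxt]) hm0.le
      · rw [div_le_one hm0]
        have hxk : x - t0 ∈ K := Set.sub_mem_sub hxt ht0
        have := hmax _ hxk
        rw [map_sub] at this
        linarith
    refine ⟨(1 + E s1 - E s2)/2, ⟨E, hEaff, hE01, rfl⟩, ?_⟩
    have hEdiff : E s1 - E s2 = F (s1 - s2) / m := by
      simp only [hE, map_sub]
      ring
    have hlt : ν < F (s1 - s2) / m := by
      rw [lt_div_iff₀ hm0]
      linarith [hνm, hFd]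
    linarith [hlt, hEdiff]
  have hPlb : (1 + mu)/2 ≤ sSup Q := by
    by_contra hcon
    push_neg at hcon
    set ν : ℝ := (max (2 * sSup Q - 1) 0 + mu) / 2 with hν
    have hmax0 := le_max_right (2 * sSup Q - 1) 0
    have hmax1 := le_max_left (2 * sSup Q - 1) 0
    have hν0 : 0 < ν := by rw [hν]; positivity
    have hνmu : ν < mu := by
      have h1 : 2 * sSup Q - 1 < mu := by linarith
      have h2 : max (2 * sSup Q - 1) 0 < mu := max_lt h1 hmu0
      rw [hν]; linarith
    obtain ⟨q, hqQ, hq⟩ := hsep ν hν0 hνmu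
    have hqle : q ≤ sSup Q := le_csSup hQbdd hqQ
    have h1 : 2 * sSup Q - 1 < mu := by linarith
    have hνge : 2 * sSup Q - 1 < ν := by rw [hν]; linarith
    linarith
  have hPsup : sSup Q = (1 + mu)/2 := le_antisymm hPub hPlb
  rw [hDinf, hPsup]
  have h2 : 2 * ((1 + mu)/2) = 1 + mu := by ring
  rw [h2, hls]
  field_simp
  ring
end
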